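/- arXiv:1004.2321 — 2 statements merged into one kernel-verified Lean document; each statement's English description precedes it below -/
import Mathlib

section
/- Let m ≤ n. The sequence d_k = (number of m-subsets A of {1,...,n} with Σ_{a∈A} a − m(m+1)/2 = k), for 0 ≤ k ≤ m(n−m), is symmetric (d_k = d_{m(n−m)−k}) and unimodal. -/
open Finset

def lamWt {n : ℕ} (A : Finset (Fin n)) : ℕ :=
  (∑ a ∈ A, (a : ℕ)) - A.card * (A.card - 1) / 2

/-- `d_k`: the number of `m`-subsets `A` of `{1,…,n}` with `|λ(A)| = k`,
i.e. `Σ_{a∈A} a − m(m+1)/2 = k`. -/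
def dcount (n m k : ℕ) : ℕ :=
  ((Finset.powersetCard m (Finset.univ : Finset (Fin n))).filter
    (fun A => lamWt A = k)).card

set_option linter.unreachableTactic false
set_option linter.unusedTactic false
set_option linter.unnecessarySeqFocus false

namespace GU


def wt (A : Finset ℕ) : ℕ := ∑ a ∈ A, a

lemma strictMono_le {k : ℕ} (f : Fin k → ℕ) (hf : StrictMono f) (i : Fin k) : (i : ℕ) ≤ f i := by
  obtain ⟨i, hi⟩ := i
  induction i with
  | zero => exact Nat.zero_le _
  | succ j ih =>
    have hj : j < k := Nat.lt_of_succ_lt hi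
    have h1 := ih hj
    have h2 : f ⟨j, hj⟩ < f ⟨j+1, hi⟩ := hf (by simp [Fin.lt_def])
    simpa using Nat.lt_of_le_of_lt h1 h2

lemma tri_le_wt (A : Finset ℕ) : A.card * (A.card - 1) / 2 ≤ wt A := by
  classical
  set k := A.card with hk
  have h1 : wt A = ∑ i : Fin k, (A.orderEmbOfFin hk.symm i : ℕ) := by
    rw [wt, ← Finset.sum_coe_sort A (fun a => (a : ℕ))]
    exact (Fintype.sum_equiv (A.orderIsoOfFin hk.symm).toEquiv
      (fun i => ((A.orderEmbOfFin hk.symm i : ℕ))) (fun a => (a : ℕ))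
      (fun i => by simp [Finset.coe_orderIsoOfFin_apply])).symm
  have h2 : ∑ i : Fin k, (i : ℕ) ≤ ∑ i : Fin k, (A.orderEmbOfFin hk.symm i : ℕ) :=
    Finset.sum_le_sum fun i _ => strictMono_le _ (A.orderEmbOfFin hk.symm).strictMono i
  have h3 : ∑ i : Fin k, (i : ℕ) = k * (k - 1) / 2 := by
    rw [show (∑ i : Fin k, (i : ℕ)) = ∑ i ∈ Finset.range k, i from Fin.sum_univ_eq_sum_range (fun i => i) k, Finset.sum_range_id]
  omega

/-- The basic weight-space index sets. -/
def BS (n m s : ℕ) : Finset (Finset ℕ) :=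
  ((range n).powerset).filter (fun A => A.card = m ∧ wt A = s)

lemma mem_BS {n m s : ℕ} {A : Finset ℕ} :
    A ∈ BS n m s ↔ A ⊆ range n ∧ A.card = m ∧ wt A = s := by
  simp [BS]

lemma wt_lower {n m s : ℕ} {A : Finset ℕ} (hA : A ∈ BS n m s) : m * (m - 1) / 2 ≤ s := by
  obtain ⟨-, hc, hw⟩ := mem_BS.1 hA
  have := tri_le_wt A
  rw [hc, hw] at this
  exact this

/-- `dcount` as a count of subsets of `range n`. -/
lemma dcount_eq_card_BS (n m k : ℕ) :
    dcount n m k = (BS n m (m * (m - 1) / 2 + k)).card := by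
  classical
  rw [dcount]
  apply Finset.card_bij (i := fun A _ => A.map Fin.valEmbedding)
  · intro A hA
    simp only [mem_filter, Finset.mem_powersetCard] at hA
    obtain ⟨⟨-, hc⟩, hl⟩ := hA
    have hwt : wt (A.map Fin.valEmbedding) = ∑ a ∈ A, (a : ℕ) := by
      rw [wt, Finset.sum_map]; rfl
    have hmin : m * (m - 1) / 2 ≤ wt (A.map Fin.valEmbedding) := by
      have := tri_le_wt (A.map Fin.valEmbedding)
      rwa [Finset.card_map, hc] at this
    rw [mem_BS]
    refine ⟨?_, by rw [Finset.card_map, hc], ?_⟩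
    · intro x hx
      simp only [Finset.mem_map, Fin.valEmbedding_apply] at hx
      obtain ⟨a, -, rfl⟩ := hx
      exact Finset.mem_range.2 a.isLt
    · rw [lamWt, hc] at hl
      omega
  · intro A hA B hB hAB
    exact Finset.map_injective _ hAB
  · intro B hB
    rw [mem_BS] at hB
    obtain ⟨hsub, hc, hw⟩ := hB
    have hlt : ∀ x ∈ B, x < n := fun x hx => Finset.mem_range.1 (hsub hx)
    have hBmap : (B.attachFin hlt).map Fin.valEmbedding = B := by
      ext x
      simp only [Finset.mem_map, Finset.mem_attachFin, Fin.valEmbedding_apply]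
      constructor
      · rintro ⟨a, ha, rfl⟩; exact ha
      · intro hx; exact ⟨⟨x, hlt x hx⟩, hx, rfl⟩
    refine ⟨B.attachFin hlt, ?_, hBmap⟩
    simp only [mem_filter, Finset.mem_powersetCard]
    have hcard : (B.attachFin hlt).card = m := by rw [Finset.card_attachFin, hc]
    refine ⟨⟨Finset.subset_univ _, hcard⟩, ?_⟩
    have hsum : ∑ a ∈ B.attachFin hlt, (a : ℕ) = wt B := by
      conv_rhs => rw [wt, ← hBmap]
      rw [Finset.sum_map]
      rfl
    rw [lamWt, hcard, hsum]
    have := tri_le_wt B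
    omega



noncomputable section
abbrev W : Type := Finset ℕ →₀ ℚ

def sgl (A : Finset ℕ) : W := Finsupp.single A 1

def eVec (A : Finset ℕ) (i : ℕ) : W :=
  if i ∈ A ∧ i + 1 ∉ A then ((i : ℚ) + 1) • sgl (insert (i + 1) (A.erase i)) else 0

def fVec (n : ℕ) (A : Finset ℕ) (j : ℕ) : W :=
  if j ∈ A ∧ j - 1 ∉ A then ((n : ℚ) - (j : ℚ)) • sgl (insert (j - 1) (A.erase j)) else 0

def Eop (i : ℕ) : W →ₗ[ℚ] W := Finsupp.linearCombination ℚ (fun A => eVec A i)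
def Fop (n j : ℕ) : W →ₗ[ℚ] W := Finsupp.linearCombination ℚ (fun A => fVec n A j)

@[simp] lemma Eop_sgl (i : ℕ) (A : Finset ℕ) : Eop i (sgl A) = eVec A i := by
  simp [Eop, sgl, Finsupp.linearCombination_single]

@[simp] lemma Fop_sgl (n j : ℕ) (A : Finset ℕ) : Fop n j (sgl A) = fVec n A j := by
  simp [Fop, sgl, Finsupp.linearCombination_single]

lemma Eop_fVec_diag (n i : ℕ) (A : Finset ℕ) :
    Eop i (fVec n A (i + 1)) =
      if i + 1 ∈ A ∧ i ∉ A then ((((i:ℚ)+1) * ((n:ℚ) - ((i:ℚ)+1)))) • sgl A else 0 := by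
  rw [fVec]
  simp only [Nat.add_sub_cancel]
  by_cases h : i + 1 ∈ A ∧ i ∉ A
  · rw [if_pos h, if_pos h, map_smul, Eop_sgl, eVec]
    have hc : i ∈ insert i (A.erase (i+1)) ∧ i + 1 ∉ insert i (A.erase (i+1)) := by
      refine ⟨Finset.mem_insert_self _ _, ?_⟩
      simp only [Finset.mem_insert, Finset.mem_erase]
      omega
    rw [if_pos hc, smul_smul]
    have h1 : (insert i (A.erase (i+1))).erase i = A.erase (i+1) :=
      Finset.erase_insert (by simp [h.2])
    rw [h1, Finset.insert_erase h.1]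
    congr 1
    push_cast
    ring
  · rw [if_neg h, if_neg h, map_zero]

lemma Fop_eVec_diag (n i : ℕ) (A : Finset ℕ) :
    Fop n (i + 1) (eVec A i) =
      if i ∈ A ∧ i + 1 ∉ A then ((((i:ℚ)+1) * ((n:ℚ) - ((i:ℚ)+1)))) • sgl A else 0 := by
  rw [eVec]
  by_cases h : i ∈ A ∧ i + 1 ∉ A
  · rw [if_pos h, if_pos h, map_smul, Fop_sgl, fVec]
    simp only [Nat.add_sub_cancel]
    have hc : i + 1 ∈ insert (i+1) (A.erase i) ∧ i ∉ insert (i+1) (A.erase i) := by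
      refine ⟨Finset.mem_insert_self _ _, ?_⟩
      simp only [Finset.mem_insert, Finset.mem_erase]
      omega
    rw [if_pos hc, smul_smul]
    have h1 : (insert (i+1) (A.erase i)).erase (i+1) = A.erase i :=
      Finset.erase_insert (by simp [h.2])
    rw [h1, Finset.insert_erase h.1]
    congr 1
    push_cast
    ring
  · rw [if_neg h, if_neg h, map_zero]

lemma cross (n i i' : ℕ) (hne : i ≠ i') (A : Finset ℕ) :
    Eop i (fVec n A (i' + 1)) = Fop n (i' + 1) (eVec A i) := by
  have auto : ∀ (P : Prop), (P ∨ ¬ P) := fun P => Classical.em P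
  by_cases hF : i' + 1 ∈ A ∧ i' ∉ A
  · by_cases hE : i ∈ A ∧ i + 1 ∉ A
    · rw [fVec, eVec]
      simp only [Nat.add_sub_cancel]
      rw [if_pos hF, if_pos hE, map_smul, map_smul, Eop_sgl, Fop_sgl, eVec, fVec]
      simp only [Nat.add_sub_cancel]
      by_cases hcase1 : i = i' + 1
      · have c1 : ¬ (i ∈ insert i' (A.erase (i'+1)) ∧ i + 1 ∉ insert i' (A.erase (i'+1))) := by
            simp only [Finset.mem_insert, Finset.mem_erase]
            by_cases m1 : i ∈ A <;> by_cases m2 : i + 1 ∈ A <;>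
              by_cases m3 : i' ∈ A <;> by_cases m4 : i' + 1 ∈ A <;>
              simp_all <;> omega
        have c2 : ¬ (i' + 1 ∈ insert (i+1) (A.erase i) ∧ i' ∉ insert (i+1) (A.erase i)) := by
            simp only [Finset.mem_insert, Finset.mem_erase]
            by_cases m1 : i ∈ A <;> by_cases m2 : i + 1 ∈ A <;>
              by_cases m3 : i' ∈ A <;> by_cases m4 : i' + 1 ∈ A <;>
              simp_all <;> omega
        rw [if_neg c1, if_neg c2, smul_zero, smul_zero]
      · by_cases hcase2 : i' = i + 1
        · have c1 : ¬ (i ∈ insert i' (A.erase (i'+1)) ∧ i + 1 ∉ insert i' (A.erase (i'+1))) := by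
            simp only [Finset.mem_insert, Finset.mem_erase]
            by_cases m1 : i ∈ A <;> by_cases m2 : i + 1 ∈ A <;>
              by_cases m3 : i' ∈ A <;> by_cases m4 : i' + 1 ∈ A <;>
              simp_all <;> omega
          have c2 : ¬ (i' + 1 ∈ insert (i+1) (A.erase i) ∧ i' ∉ insert (i+1) (A.erase i)) := by
            simp only [Finset.mem_insert, Finset.mem_erase]
            by_cases m1 : i ∈ A <;> by_cases m2 : i + 1 ∈ A <;>
              by_cases m3 : i' ∈ A <;> by_cases m4 : i' + 1 ∈ A <;>
              simp_all <;> omega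
          rw [if_neg c1, if_neg c2, smul_zero, smul_zero]
        · have c1 : i ∈ insert i' (A.erase (i'+1)) ∧ i + 1 ∉ insert i' (A.erase (i'+1)) := by
            simp only [Finset.mem_insert, Finset.mem_erase]
            by_cases m1 : i ∈ A <;> by_cases m2 : i + 1 ∈ A <;>
              by_cases m3 : i' ∈ A <;> by_cases m4 : i' + 1 ∈ A <;>
              simp_all <;> omega
          have c2 : i' + 1 ∈ insert (i+1) (A.erase i) ∧ i' ∉ insert (i+1) (A.erase i) := by
            simp only [Finset.mem_insert, Finset.mem_erase]
            by_cases m1 : i ∈ A <;> by_cases m2 : i + 1 ∈ A <;>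
              by_cases m3 : i' ∈ A <;> by_cases m4 : i' + 1 ∈ A <;>
              simp_all <;> omega
          rw [if_pos c1, if_pos c2, smul_smul, smul_smul]
          have hset : insert (i+1) ((insert i' (A.erase (i'+1))).erase i)
              = insert i' ((insert (i+1) (A.erase i)).erase (i'+1)) := by
            ext x
            simp only [Finset.mem_insert, Finset.mem_erase]
            by_cases hx : x ∈ A <;> simp_all <;> omega
          rw [hset]
          congr 1
          ring
    · rw [eVec, if_neg hE, map_zero, fVec]
      simp only [Nat.add_sub_cancel]
      by_cases hF' : i' + 1 ∈ A ∧ i' ∉ A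
      · rw [if_pos hF', map_smul, Eop_sgl, eVec]
        have c1 : ¬ (i ∈ insert i' (A.erase (i'+1)) ∧ i + 1 ∉ insert i' (A.erase (i'+1))) := by
            simp only [Finset.mem_insert, Finset.mem_erase]
            by_cases m1 : i ∈ A <;> by_cases m2 : i + 1 ∈ A <;>
              by_cases m3 : i' ∈ A <;> by_cases m4 : i' + 1 ∈ A <;>
              simp_all <;> omega
        rw [if_neg c1, smul_zero]
      · rw [if_neg hF', map_zero]
  · rw [fVec]
    simp only [Nat.add_sub_cancel]
    rw [if_neg hF, map_zero, eVec]
    by_cases hE : i ∈ A ∧ i + 1 ∉ A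
    · rw [if_pos hE, map_smul, Fop_sgl, fVec]
      simp only [Nat.add_sub_cancel]
      have c2 : ¬ (i' + 1 ∈ insert (i+1) (A.erase i) ∧ i' ∉ insert (i+1) (A.erase i)) := by
            simp only [Finset.mem_insert, Finset.mem_erase]
            by_cases m1 : i ∈ A <;> by_cases m2 : i + 1 ∈ A <;>
              by_cases m3 : i' ∈ A <;> by_cases m4 : i' + 1 ∈ A <;>
              simp_all <;> omega
      rw [if_neg c2, smul_zero]
    · rw [if_neg hE, map_zero]

def EE (n : ℕ) : W →ₗ[ℚ] W := ∑ i ∈ range (n-1), Eop i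
def FF (n : ℕ) : W →ₗ[ℚ] W := ∑ i ∈ range (n-1), Fop n (i+1)

def gq (n x : ℕ) : ℚ := (x:ℚ) * ((n:ℚ) - (x:ℚ))

lemma sum_coeff (n : ℕ) (A : Finset ℕ) (hA : A ⊆ range n) :
    ∑ i ∈ range (n-1), ((if i+1 ∈ A ∧ i ∉ A then (((i:ℚ)+1) * ((n:ℚ) - ((i:ℚ)+1))) else 0)
      - (if i ∈ A ∧ i+1 ∉ A then (((i:ℚ)+1) * ((n:ℚ) - ((i:ℚ)+1))) else 0))
    = ∑ a ∈ A, (2*(a:ℚ) + 1 - (n:ℚ)) := by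
  have step1 : ∀ i, ((if i+1 ∈ A ∧ i ∉ A then (((i:ℚ)+1) * ((n:ℚ) - ((i:ℚ)+1))) else 0)
      - (if i ∈ A ∧ i+1 ∉ A then (((i:ℚ)+1) * ((n:ℚ) - ((i:ℚ)+1))) else 0))
      = (if i+1 ∈ A then gq n (i+1) else 0) - (if i ∈ A then gq n (i+1) else 0) := by
    intro i
    by_cases h1 : i ∈ A <;> by_cases h2 : i+1 ∈ A <;>
      simp [h1, h2, gq] <;> push_cast <;> ring
  rw [Finset.sum_congr rfl (fun i _ => step1 i), Finset.sum_sub_distrib]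
  rcases n with _ | n'
  · have hempty : A = ∅ := Finset.subset_empty.1 (by simpa using hA)
    subst hempty
    simp
  · have e2 : ∑ i ∈ range (n'+1-1), (if i+1 ∈ A then gq (n'+1) (i+1) else 0)
        = ∑ a ∈ A, gq (n'+1) a := by
      simp only [Nat.add_sub_cancel]
      have hs := Finset.sum_range_succ' (fun x => if x ∈ A then gq (n'+1) x else 0) n'
      have h0 : (if 0 ∈ A then gq (n'+1) 0 else 0) = 0 := by simp [gq]
      calc ∑ i ∈ range n', (if i+1 ∈ A then gq (n'+1) (i+1) else 0)
          = ∑ i ∈ range (n'+1), (if i ∈ A then gq (n'+1) i else 0) := by rw [hs, h0, add_zero]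
        _ = ∑ a ∈ range (n'+1) ∩ A, gq (n'+1) a := Finset.sum_ite_mem _ _ _
        _ = ∑ a ∈ A, gq (n'+1) a := by rw [Finset.inter_eq_right.2 hA]
    have e3 : ∑ i ∈ range (n'+1-1), (if i ∈ A then gq (n'+1) (i+1) else 0)
        = ∑ a ∈ A, gq (n'+1) (a+1) := by
      simp only [Nat.add_sub_cancel]
      rw [Finset.sum_ite_mem]
      apply Finset.sum_subset Finset.inter_subset_right
      intro x hx hnx
      have hx1 : x < n'+1 := Finset.mem_range.1 (hA hx)
      have hxn : x = n' := by
        have : x ∉ range n' := fun hc => hnx (Finset.mem_inter.2 ⟨hc, hx⟩)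
        simp only [Finset.mem_range] at this
        omega
      subst hxn
      simp only [gq]
      push_cast
      ring
    rw [e2, e3, ← Finset.sum_sub_distrib]
    apply Finset.sum_congr rfl
    intro a _
    simp only [gq]
    push_cast
    ring

lemma comm_sgl (n : ℕ) (A : Finset ℕ) (hA : A ⊆ range n) :
    EE n (FF n (sgl A)) - FF n (EE n (sgl A))
      = (∑ a ∈ A, (2*(a:ℚ) + 1 - (n:ℚ))) • sgl A := by
  have h1 : EE n (FF n (sgl A))
      = ∑ i ∈ range (n-1), ∑ i' ∈ range (n-1), Eop i (fVec n A (i'+1)) := by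
    rw [FF, LinearMap.sum_apply]
    simp only [Fop_sgl]
    rw [map_sum, Finset.sum_comm]
    apply Finset.sum_congr rfl
    intro i _
    rw [EE, LinearMap.sum_apply]
  have h2 : FF n (EE n (sgl A))
      = ∑ i ∈ range (n-1), ∑ i' ∈ range (n-1), Fop n (i'+1) (eVec A i) := by
    rw [EE, LinearMap.sum_apply]
    simp only [Eop_sgl]
    rw [map_sum]
    apply Finset.sum_congr rfl
    intro i _
    rw [FF, LinearMap.sum_apply]
  rw [h1, h2, ← Finset.sum_sub_distrib]
  have h3 : ∀ i ∈ range (n-1),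
      (∑ i' ∈ range (n-1), Eop i (fVec n A (i'+1)))
        - (∑ i' ∈ range (n-1), Fop n (i'+1) (eVec A i))
      = ((if i+1 ∈ A ∧ i ∉ A then (((i:ℚ)+1) * ((n:ℚ) - ((i:ℚ)+1))) else 0)
          - (if i ∈ A ∧ i+1 ∉ A then (((i:ℚ)+1) * ((n:ℚ) - ((i:ℚ)+1))) else 0)) • sgl A := by
    intro i hi
    have hce : ∀ i' ∈ range (n-1), i' ≠ i → Eop i (fVec n A (i'+1)) - Fop n (i'+1) (eVec A i) = 0 := by
      intro i' _ hne
      rw [cross n i i' (fun hc => hne (hc.symm)), sub_self]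
    have : (∑ i' ∈ range (n-1), (Eop i (fVec n A (i'+1)) - Fop n (i'+1) (eVec A i)))
        = Eop i (fVec n A (i+1)) - Fop n (i+1) (eVec A i) :=
      Finset.sum_eq_single_of_mem i hi hce
    rw [← Finset.sum_sub_distrib, this, Eop_fVec_diag, Fop_eVec_diag]
    split_ifs with hc1 hc2 hc3 <;> simp [sub_smul]
  rw [Finset.sum_congr rfl h3, ← Finset.sum_smul, sum_coeff n A hA]

def V (n m s : ℕ) : Submodule ℚ W := Submodule.span ℚ ((BS n m s).image sgl : Set W)

lemma sgl_mem_V {n m s : ℕ} {A : Finset ℕ} (hA : A ∈ BS n m s) : sgl A ∈ V n m s :=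
  Submodule.subset_span (by simp only [Finset.coe_image, Set.mem_image]; exact ⟨A, hA, rfl⟩)

lemma eVec_mem_V {n m s : ℕ} {A : Finset ℕ} (hA : A ∈ BS n m s) {i : ℕ}
    (hi : i ∈ range (n-1)) : eVec A i ∈ V n m (s+1) := by
  obtain ⟨hsub, hc, hw⟩ := mem_BS.1 hA
  rw [eVec]
  split_ifs with h
  · apply Submodule.smul_mem
    apply sgl_mem_V
    rw [mem_BS]
    have hin : i + 1 < n := by
      have := Finset.mem_range.1 hi
      omega
    have hni : i + 1 ∉ A.erase i := by simp [h.2]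
    have hii : i ∈ A := h.1
    refine ⟨?_, ?_, ?_⟩
    · intro x hx
      rcases Finset.mem_insert.1 hx with rfl | hx'
      · exact Finset.mem_range.2 hin
      · exact hsub (Finset.erase_subset _ _ hx')
    · rw [Finset.card_insert_of_notMem hni, Finset.card_erase_of_mem hii, hc]
      have : 1 ≤ m := by
        rw [← hc]
        exact Finset.card_pos.2 ⟨i, hii⟩
      omega
    · rw [wt, Finset.sum_insert hni]
      have h1 : ∑ a ∈ A.erase i, a = wt A - i := by
        rw [wt, ← Finset.add_sum_erase A _ hii]
        omega
      have h2 : i ≤ wt A := by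
        rw [wt, ← Finset.add_sum_erase A _ hii]
        omega
      omega
  · exact Submodule.zero_mem _

lemma fVec_mem_V {n m s : ℕ} {A : Finset ℕ} (hA : A ∈ BS n m s) {i : ℕ}
    (hi : i ∈ range (n-1)) : fVec n A (i+1) ∈ V n m (s-1) := by
  obtain ⟨hsub, hc, hw⟩ := mem_BS.1 hA
  rw [fVec]
  simp only [Nat.add_sub_cancel]
  split_ifs with h
  · apply Submodule.smul_mem
    apply sgl_mem_V
    rw [mem_BS]
    have hin : i < n := by
      have := Finset.mem_range.1 hi
      omega
    have hni : i ∉ A.erase (i+1) := by simp [h.2]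
    have hii : i + 1 ∈ A := h.1
    refine ⟨?_, ?_, ?_⟩
    · intro x hx
      rcases Finset.mem_insert.1 hx with rfl | hx'
      · exact Finset.mem_range.2 hin
      · exact hsub (Finset.erase_subset _ _ hx')
    · rw [Finset.card_insert_of_notMem hni, Finset.card_erase_of_mem hii, hc]
      have : 1 ≤ m := by
        rw [← hc]
        exact Finset.card_pos.2 ⟨i+1, hii⟩
      omega
    · rw [wt, Finset.sum_insert hni]
      have h1 : ∑ a ∈ A.erase (i+1), a = wt A - (i+1) := by
        rw [wt, ← Finset.add_sum_erase A _ hii]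
        omega
      have h2 : i + 1 ≤ wt A := by
        rw [wt, ← Finset.add_sum_erase A _ hii]
        omega
      omega
  · exact Submodule.zero_mem _

lemma EE_mem_V {n m s : ℕ} {x : W} (hx : x ∈ V n m s) : EE n x ∈ V n m (s+1) := by
  induction hx using Submodule.span_induction with
  | mem y hy =>
    simp only [Finset.coe_image, Set.mem_image, Finset.mem_coe] at hy
    obtain ⟨A, hA, rfl⟩ := hy
    rw [EE, LinearMap.sum_apply]
    apply Submodule.sum_mem
    intro i hi
    rw [Eop_sgl]
    exact eVec_mem_V hA hi
  | zero => simp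
  | add y z _ _ hy hz => rw [map_add]; exact Submodule.add_mem _ hy hz
  | smul c y _ hy => rw [map_smul]; exact Submodule.smul_mem _ _ hy

lemma FF_mem_V {n m s : ℕ} {x : W} (hx : x ∈ V n m s) : FF n x ∈ V n m (s-1) := by
  induction hx using Submodule.span_induction with
  | mem y hy =>
    simp only [Finset.coe_image, Set.mem_image, Finset.mem_coe] at hy
    obtain ⟨A, hA, rfl⟩ := hy
    rw [FF, LinearMap.sum_apply]
    apply Submodule.sum_mem
    intro i hi
    rw [Fop_sgl]
    exact fVec_mem_V hA hi
  | zero => simp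
  | add y z _ _ hy hz => rw [map_add]; exact Submodule.add_mem _ hy hz
  | smul c y _ hy => rw [map_smul]; exact Submodule.smul_mem _ _ hy

lemma FF_bot {n m : ℕ} {x : W} (hx : x ∈ V n m 0) : FF n x = 0 := by
  induction hx using Submodule.span_induction with
  | mem y hy =>
    simp only [Finset.coe_image, Set.mem_image, Finset.mem_coe] at hy
    obtain ⟨A, hA, rfl⟩ := hy
    obtain ⟨hsub, hc, hw⟩ := mem_BS.1 hA
    rw [FF, LinearMap.sum_apply]
    apply Finset.sum_eq_zero
    intro i _
    rw [Fop_sgl, fVec, if_neg]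
    intro hmem
    have : i + 1 ≤ wt A := Finset.single_le_sum (f := fun a => a) (fun _ _ => Nat.zero_le _) hmem.1
    omega
  | zero => simp
  | add y z _ _ hy hz => rw [map_add, hy, hz, add_zero]
  | smul c y _ hy => rw [map_smul, hy, smul_zero]

lemma H_eigen {n m s : ℕ} {x : W} (hx : x ∈ V n m s) :
    EE n (FF n x) - FF n (EE n x) = (2*(s:ℚ) + (m:ℚ) - (m:ℚ)*(n:ℚ)) • x := by
  induction hx using Submodule.span_induction with
  | mem y hy =>
    simp only [Finset.coe_image, Set.mem_image, Finset.mem_coe] at hy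
    obtain ⟨A, hA, rfl⟩ := hy
    obtain ⟨hsub, hc, hw⟩ := mem_BS.1 hA
    rw [comm_sgl n A hsub]
    congr 1
    have hsA : (∑ a ∈ A, (a:ℚ)) = (s:ℚ) := by
      rw [← hw, wt]
      push_cast
      ring
    rw [Finset.sum_sub_distrib, Finset.sum_add_distrib, Finset.sum_const, Finset.sum_const,
      ← Finset.mul_sum, hsA, hc]
    simp only [nsmul_eq_mul, mul_one]
  | zero => simp
  | add y z _ _ hy hz =>
    simp only [map_add]
    rw [smul_add, ← hy, ← hz]
    abel
  | smul c y _ hy =>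
    simp only [map_smul]
    rw [← smul_sub, hy, smul_smul, smul_smul, mul_comm]

lemma pow_FF_mem {n m s : ℕ} {x : W} (hx : x ∈ V n m s) :
    ∀ j, j ≤ s → ((FF n)^j) x ∈ V n m (s - j) := by
  intro j
  induction j with
  | zero => intro _; simpa using hx
  | succ j ih =>
    intro hj
    have h1 := FF_mem_V (ih (by omega))
    have he : s - (j+1) = (s - j) - 1 := by omega
    rw [he, pow_succ', Module.End.mul_apply]
    exact h1

lemma pow_FF_zero {n m s : ℕ} {x : W} (hx : x ∈ V n m s) :
    ∀ j, s < j → ((FF n)^j) x = 0 := by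
  have hbase : ((FF n)^(s+1)) x = 0 := by
    rw [pow_succ', Module.End.mul_apply]
    apply FF_bot (n := n) (m := m)
    have := pow_FF_mem hx s le_rfl
    rwa [Nat.sub_self] at this
  intro j hj
  obtain ⟨t, rfl⟩ : ∃ t, j = t + (s+1) := ⟨j - (s+1), by omega⟩
  rw [pow_add, Module.End.mul_apply, hbase, map_zero]

lemma E_formula {n m s : ℕ} {x : W} (hx : x ∈ V n m s) (hEx : EE n x = 0) :
    ∀ j : ℕ, EE n (((FF n)^(j+1)) x)
      = (((j:ℚ)+1) * ((2*(s:ℚ) + (m:ℚ) - (m:ℚ)*(n:ℚ)) - (j:ℚ))) • ((FF n)^j) x := by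
  intro j
  induction j with
  | zero =>
    rw [pow_one, pow_zero, Module.End.one_apply]
    have h := H_eigen hx
    rw [hEx, map_zero, sub_zero] at h
    rw [h]
    congr 1
    push_cast
    ring
  | succ j ih =>
    by_cases hj : j + 1 ≤ s
    · have hmem : ((FF n)^(j+1)) x ∈ V n m (s - (j+1)) := pow_FF_mem hx (j+1) hj
      have hFFj : (FF n) (((FF n)^j) x) = ((FF n)^(j+1)) x := by
        conv_rhs => rw [pow_succ']
        rfl
      have hFFj1 : (FF n) (((FF n)^(j+1)) x) = ((FF n)^(j+1+1)) x := by
        conv_rhs => rw [pow_succ' (FF n) (j+1)]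
        rfl
      have h := H_eigen hmem
      rw [hFFj1, ih, map_smul, hFFj] at h
      have h' : EE n (((FF n)^(j+1+1)) x)
          = (2*((s - (j+1) : ℕ):ℚ) + (m:ℚ) - (m:ℚ)*(n:ℚ)) • ((FF n)^(j+1)) x
            + (((j:ℚ)+1) * ((2*(s:ℚ) + (m:ℚ) - (m:ℚ)*(n:ℚ)) - (j:ℚ))) • ((FF n)^(j+1)) x := by
        rw [← h]
        abel
      rw [h', ← add_smul]
      congr 1
      have hc : ((s - (j+1) : ℕ):ℚ) = (s:ℚ) - ((j:ℚ)+1) := by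
        push_cast [Nat.cast_sub hj]
        ring
      rw [hc]
      push_cast
      ring
    · have h1 : ((FF n)^(j+1)) x = 0 := pow_FF_zero hx (j+1) (by omega)
      have h2 : ((FF n)^(j+1+1)) x = 0 := pow_FF_zero hx (j+1+1) (by omega)
      rw [h1, h2, map_zero, smul_zero]

lemma inj_on_V {n m s : ℕ} (hμ : 2*(s:ℚ) + (m:ℚ) - (m:ℚ)*(n:ℚ) < 0) {x : W}
    (hx : x ∈ V n m s) (hEx : EE n x = 0) : x = 0 := by
  classical
  by_contra hne
  have hex : ∃ j, ((FF n)^j) x = 0 := ⟨s+1, pow_FF_zero hx _ (by omega)⟩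
  have hM0 : Nat.find hex ≠ 0 := by
    intro h0
    have := Nat.find_spec hex
    rw [h0, pow_zero, Module.End.one_apply] at this
    exact hne this
  obtain ⟨M', hM'⟩ : ∃ M', Nat.find hex = M' + 1 := ⟨Nat.find hex - 1, by omega⟩
  have hspec : ((FF n)^(M'+1)) x = 0 := by rw [← hM']; exact Nat.find_spec hex
  have hmin : ((FF n)^M') x ≠ 0 := Nat.find_min hex (by omega)
  have hf := E_formula hx hEx M'
  rw [hspec, map_zero] at hf
  rcases smul_eq_zero.1 hf.symm with hc | hx0
  · rcases mul_eq_zero.1 hc with h1 | h1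
    · have : (0:ℚ) < (M':ℚ) + 1 := by positivity
      rw [h1] at this
      exact lt_irrefl _ this
    · have h2 : (2*(s:ℚ) + (m:ℚ) - (m:ℚ)*(n:ℚ)) = (M':ℚ) := by linarith
      rw [h2] at hμ
      have : (0:ℚ) ≤ (M':ℚ) := Nat.cast_nonneg _
      linarith
  · exact hmin hx0

lemma card_BS_eq_finrank (n m s : ℕ) :
    (BS n m s).card = Module.finrank ℚ (V n m s) := by
  classical
  have hinj : Function.Injective sgl :=
    Finsupp.single_left_injective (one_ne_zero)
  have hli0 : LinearIndependent ℚ (fun A : Finset ℕ => sgl A) := by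
    have h := (Finsupp.basisSingleOne (R := ℚ) (ι := Finset ℕ)).linearIndependent
    rwa [Finsupp.coe_basisSingleOne] at h
  have hli : LinearIndependent ℚ ((↑) : ((BS n m s).image sgl : Set W) → W) := by
    apply ((linearIndepOn_id_range_iff hinj).mpr hli0).mono
    intro x hx
    simp only [Finset.coe_image, Set.mem_image, Finset.mem_coe] at hx
    obtain ⟨A, -, rfl⟩ := hx
    exact ⟨A, rfl⟩
  have h1 := finrank_span_finset_eq_card hli
  rw [V, h1, Finset.card_image_of_injective _ hinj]

end

lemma tri_two (m : ℕ) : 2 * (m * (m - 1) / 2) = m * (m - 1) := by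
  have : 2 ∣ m * (m - 1) := by
    rcases Nat.even_or_odd m with he | ho
    · exact Dvd.dvd.mul_right he.two_dvd _
    · exact Dvd.dvd.mul_left (Nat.Odd.sub_odd ho odd_one).two_dvd _
  omega

lemma dcount_mono_step (n m : ℕ) (h : m ≤ n) {k : ℕ} (hk : 2 * k < m * (n - m)) :
    dcount n m k ≤ dcount n m (k + 1) := by
  classical
  have hm : 1 ≤ m := by
    rcases Nat.eq_zero_or_pos m with rfl | hm
    · simp at hk
    · exact hm
  have hμ : 2*(((m * (m - 1) / 2 + k) : ℕ):ℚ) + (m:ℚ) - (m:ℚ)*(n:ℚ) < 0 := by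
    have h2T' : 2 * ((m * (m - 1) / 2 : ℕ):ℚ) = (m:ℚ)*(m:ℚ) - (m:ℚ) := by
      have hc : ((2 * (m * (m-1)/2) : ℕ):ℚ) = ((m*(m-1) : ℕ):ℚ) := by
        exact_mod_cast congrArg (fun x : ℕ => (x:ℚ)) (tri_two m)
      push_cast [Nat.cast_sub hm] at hc
      linarith
    have hkQ : (2*(k:ℚ)) < (m:ℚ)*(n:ℚ) - (m:ℚ)*(m:ℚ) := by
      have h1 : ((2*k : ℕ):ℚ) < ((m*(n-m) : ℕ):ℚ) := by exact_mod_cast hk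
      push_cast [Nat.cast_sub h] at h1
      linarith [h1]
    push_cast
    linarith [h2T', hkQ]
  have hmaps : ∀ x ∈ V n m (m * (m - 1) / 2 + k), EE n x ∈ V n m (m * (m - 1) / 2 + k + 1) :=
    fun x hx => EE_mem_V hx
  have hφ : Function.Injective ((EE n).restrict hmaps) := by
    rw [← LinearMap.ker_eq_bot, LinearMap.ker_eq_bot']
    intro z hz
    have hz' : EE n (z : W) = 0 := by
      have h1 := congrArg (Subtype.val) hz
      simpa [LinearMap.restrict_apply] using h1
    exact Subtype.ext (inj_on_V hμ z.2 hz')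
  haveI : Module.Finite ℚ (V n m (m * (m - 1) / 2 + k + 1)) := by
    show Module.Finite ℚ (Submodule.span ℚ (((BS n m (m * (m - 1) / 2 + k + 1)).image sgl : Finset W) : Set W))
    infer_instance
  have hrank := LinearMap.finrank_le_finrank_of_injective hφ
  rw [dcount_eq_card_BS, dcount_eq_card_BS, card_BS_eq_finrank, card_BS_eq_finrank]
  have he : m * (m - 1) / 2 + (k + 1) = m * (m - 1) / 2 + k + 1 := by omega
  rw [he]
  exact hrank


/-- reversal map -/
def rv (n : ℕ) (A : Finset ℕ) : Finset ℕ := A.image (fun a => n - 1 - a)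

lemma rv_mem_BS {n m s : ℕ} {A : Finset ℕ} (hA : A ∈ BS n m s) :
    rv n A ∈ BS n m (2 * (m * (m - 1) / 2) + m * (n - m) - s) := by
  obtain ⟨hsub, hc, hw⟩ := mem_BS.1 hA
  have hlt : ∀ a ∈ A, a < n := fun a ha => Finset.mem_range.1 (hsub ha)
  have hinj : Set.InjOn (fun a => n - 1 - a) A := by
    intro a ha b hb hab
    have := hlt a ha; have := hlt b hb
    simp only at hab
    omega
  have hcard : (rv n A).card = m := by rw [rv, Finset.card_image_of_injOn hinj, hc]
  have hwt : wt (rv n A) + wt A = m * (n - 1) := by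
    rw [rv, wt, wt, Finset.sum_image hinj, ← Finset.sum_add_distrib]
    have : ∀ a ∈ A, (n - 1 - a) + a = n - 1 := by intro a ha; have := hlt a ha; omega
    rw [Finset.sum_congr rfl this, Finset.sum_const, hc, smul_eq_mul]
  have htri : 2 * (m * (m - 1) / 2) = m * (m - 1) := by
    have : 2 ∣ m * (m - 1) := by
      rcases Nat.even_or_odd m with he | ho
      · exact Dvd.dvd.mul_right he.two_dvd _
      · exact Dvd.dvd.mul_left (Nat.Odd.sub_odd ho odd_one).two_dvd _
    omega
  have hkey : m * (n - 1) = 2 * (m * (m - 1) / 2) + m * (n - m) := by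
    rcases le_or_gt m n with hmn | hmn
    · rw [htri]
      rcases Nat.eq_zero_or_pos m with rfl | hm
      · simp
      · have : 1 ≤ n := le_trans hm hmn
        zify [this, hmn, hm]
        ring
    · -- m > n : A ⊆ range n with card m forces m ≤ n
      exfalso
      have := Finset.card_le_card hsub
      rw [hc, Finset.card_range] at this
      omega
  have hs_le : s ≤ 2 * (m * (m - 1) / 2) + m * (n - m) := by
    rw [← hkey, ← hwt]; omega
  rw [mem_BS]
  refine ⟨?_, hcard, by omega⟩
  intro x hx
  rw [rv, Finset.mem_image] at hx
  obtain ⟨a, ha, rfl⟩ := hx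
  have := hlt a ha
  have hn : 0 < n := lt_of_le_of_lt (Nat.zero_le _) this
  exact Finset.mem_range.2 (by omega)

lemma wt_sum_rv {n m s : ℕ} {A : Finset ℕ} (hA : A ∈ BS n m s) :
    wt (rv n A) + s = 2 * (m * (m - 1) / 2) + m * (n - m) := by
  obtain ⟨hsub, hc, hw⟩ := mem_BS.1 hA
  have hlt : ∀ a ∈ A, a < n := fun a ha => Finset.mem_range.1 (hsub ha)
  have hinj : Set.InjOn (fun a => n - 1 - a) A := by
    intro a ha b hb hab
    have := hlt a ha; have := hlt b hb
    simp only at hab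
    omega
  have hwt : wt (rv n A) + wt A = m * (n - 1) := by
    rw [rv, wt, wt, Finset.sum_image hinj, ← Finset.sum_add_distrib]
    have : ∀ a ∈ A, (n - 1 - a) + a = n - 1 := by intro a ha; have := hlt a ha; omega
    rw [Finset.sum_congr rfl this, Finset.sum_const, hc, smul_eq_mul]
  have htri : 2 * (m * (m - 1) / 2) = m * (m - 1) := by
    have : 2 ∣ m * (m - 1) := by
      rcases Nat.even_or_odd m with he | ho
      · exact Dvd.dvd.mul_right he.two_dvd _
      · exact Dvd.dvd.mul_left (Nat.Odd.sub_odd ho odd_one).two_dvd _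
    omega
  have hkey : m * (n - 1) = 2 * (m * (m - 1) / 2) + m * (n - m) := by
    rcases le_or_gt m n with hmn | hmn
    · rw [htri]
      rcases Nat.eq_zero_or_pos m with rfl | hm
      · simp
      · have : 1 ≤ n := le_trans hm hmn
        zify [this, hmn, hm]
        ring
    · exfalso
      have := Finset.card_le_card hsub
      rw [hc, Finset.card_range] at this
      omega
  omega

lemma wt_upper {n m s : ℕ} {A : Finset ℕ} (hA : A ∈ BS n m s) :
    s ≤ m * (m - 1) / 2 + m * (n - m) := by
  have h1 := wt_sum_rv hA
  have h2 := wt_lower (rv_mem_BS hA)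
  have h3 := wt_lower hA
  have h4 : m * (m - 1) / 2 ≤ wt (rv n A) := by
    have h5 := rv_mem_BS hA
    obtain ⟨-, hc, hw⟩ := mem_BS.1 h5
    have := tri_le_wt (rv n A)
    rw [hc] at this
    exact this
  omega

lemma rv_involutive {n : ℕ} {A : Finset ℕ} (hsub : A ⊆ range n) : rv n (rv n A) = A := by
  have hlt : ∀ a ∈ A, a < n := fun a ha => Finset.mem_range.1 (hsub ha)
  rw [rv, rv, Finset.image_image]
  ext x
  simp only [Finset.mem_image, Function.comp_apply]
  constructor
  · rintro ⟨a, ha, rfl⟩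
    have := hlt a ha
    have : n - 1 - (n - 1 - a) = a := by omega
    rwa [this]
  · intro hx
    refine ⟨x, hx, ?_⟩
    have := hlt x hx
    omega

lemma card_BS_symm {n m k : ℕ} (hk : k ≤ m * (n - m)) :
    (BS n m (m * (m - 1) / 2 + k)).card = (BS n m (m * (m - 1) / 2 + (m * (n - m) - k))).card := by
  set T := m * (m - 1) / 2
  apply Finset.card_bij (i := fun A _ => rv n A)
  · intro A hA
    have := rv_mem_BS hA
    have heq : 2 * T + m * (n - m) - (T + k) = T + (m * (n - m) - k) := by omega
    rwa [heq] at this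
  · intro A hA B hB hAB
    have hA' := (mem_BS.1 hA).1
    have hB' := (mem_BS.1 hB).1
    rw [← rv_involutive hA', ← rv_involutive hB', hAB]
  · intro B hB
    refine ⟨rv n B, ?_, rv_involutive (mem_BS.1 hB).1⟩
    have := rv_mem_BS hB
    have heq : 2 * T + m * (n - m) - (T + (m * (n - m) - k)) = T + k := by omega
    rwa [heq] at this

lemma BS_empty_of_large {n m j : ℕ} (hj : m * (n - m) < j) :
    BS n m (m * (m - 1) / 2 + j) = ∅ := by
  rw [Finset.eq_empty_iff_forall_notMem]
  intro A hA
  have h1 := wt_upper hA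
  have h2 := wt_lower hA
  omega

lemma dcount_symm (n m : ℕ) {k : ℕ} (hk : k ≤ m * (n - m)) :
    dcount n m k = dcount n m (m * (n - m) - k) := by
  rw [dcount_eq_card_BS, dcount_eq_card_BS]
  exact card_BS_symm hk

lemma dcount_zero_of_large (n m : ℕ) {j : ℕ} (hj : m * (n - m) < j) : dcount n m j = 0 := by
  rw [dcount_eq_card_BS, BS_empty_of_large hj, Finset.card_empty]


lemma dcount_chain (n m : ℕ) (h : m ≤ n) {k l : ℕ} (hkl : k ≤ l)
    (hl : 2 * l ≤ m * (n - m) + 1) : dcount n m k ≤ dcount n m l := by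
  induction l, hkl using Nat.le_induction with
  | base => exact le_rfl
  | succ l hkl ih =>
    exact le_trans (ih (by omega)) (dcount_mono_step n m h (by omega))


end GU

/-- the sequence `d_k`, `0 ≤ k ≤ m(n−m)`, is symmetric
(`d_k = d_{m(n−m)−k}`) and unimodal. -/
theorem dcount_symmetric_unimodal (n m : ℕ) (h : m ≤ n) :
    (∀ k ≤ m * (n - m), dcount n m k = dcount n m (m * (n - m) - k))
    ∧ ∃ k0 ≤ m * (n - m),
        (∀ k l, k ≤ l → l ≤ k0 → dcount n m k ≤ dcount n m l)
        ∧ (∀ k l, k0 ≤ k → k ≤ l → dcount n m l ≤ dcount n m k) := by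
  set N := m * (n - m) with hN
  refine ⟨fun k hk => GU.dcount_symm n m hk, (N + 1) / 2, by omega, ?_, ?_⟩
  · intro k l hkl hl
    exact GU.dcount_chain n m h hkl (by omega)
  · intro k l hk hkl
    rcases le_or_gt l N with hlN | hlN
    · have hkN : k ≤ N := le_trans hkl hlN
      rw [GU.dcount_symm n m hlN, GU.dcount_symm n m hkN]
      exact GU.dcount_chain n m h (by omega) (by omega)
    · rw [GU.dcount_zero_of_large n m hlN]
      exact Nat.zero_le _
end

section
/- Let n ≥ 1 and a_1,...,a_n ∈ ℂ^* be pairwise distinct, with a_i/a_j ∉ {q^2, q^{−2}} for i ≠ j not assumed. On the 2^n-dimensional space with basis (V_A)_{A ⊆ {1,...,n}}, define φ^±(u) V_A = V_A ∏_{j∈A}(q^{−1} − q a_j u)/(1 − a_j u) · ∏_{j∉A}(q − q^{−1} a_j u)/(1 − a_j u), x^+(u) V_A = Σ_{j∈A} δ(a_j/u) V_{A∖{j}} ∏_{k∉A}(a_j q − a_k q^{−1})/(a_j − a_k), x^−(u) V_A = Σ_{j∉A} δ(a_j/u) V_{A∪{j}} ∏_{k∈A}(a_k q − a_j q^{−1})/(a_k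 − a_j). These formulas define a representation of the quantum loop algebra U_q(Lsl_2). -/
open Finset Matrix PowerSeries

namespace ThinStandardModule

variable (n : ℕ) (q : ℂ) (a : Fin n → ℂ)

/-- `x⁺_t V_A = Σ_{j∈A} a_j^t V_{A∖{j}} ∏_{k∉A}(a_j q − a_k q⁻¹)/(a_j − a_k)`,
as a matrix in the basis `(V_A)_{A ⊆ {1,…,n}}`. -/
noncomputable def Xp (t : ℤ) : Matrix (Finset (Fin n)) (Finset (Fin n)) ℂ :=
  fun B A => ∑ j ∈ A, if B = A.erase j then
      a j ^ t * ∏ k ∈ Aᶜ, (a j * q - a k * q⁻¹) / (a j - a k)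
    else 0

/-- `x⁻_t V_A = Σ_{j∉A} a_j^t V_{A∪{j}} ∏_{k∈A}(a_k q − a_j q⁻¹)/(a_k − a_j)`. -/
noncomputable def Xm (t : ℤ) : Matrix (Finset (Fin n)) (Finset (Fin n)) ℂ :=
  fun B A => ∑ j ∈ Aᶜ, if B = insert j A then
      a j ^ t * ∏ k ∈ A, (a k * q - a j * q⁻¹) / (a k - a j)
    else 0

/-- The power series (in `u`) `∏_{j∈A}(q⁻¹ − q a_j u) ∏_{j∉A}(q − q⁻¹ a_j u) / ∏_j (1 − a_j u)`,
the eigenvalue of `φ⁺(u)` on `V_A`. -/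
noncomputable def gp (A : Finset (Fin n)) : PowerSeries ℂ :=
  (∏ j ∈ A, (PowerSeries.C q⁻¹ - PowerSeries.C (q * a j) * PowerSeries.X))
  * (∏ j ∈ Aᶜ, (PowerSeries.C q - PowerSeries.C (q⁻¹ * a j) * PowerSeries.X))
  * (∏ j : Fin n, (1 - PowerSeries.C (a j) * PowerSeries.X))⁻¹

/-- The power series (in `w = u⁻¹`)
`∏_{j∈A}(q − q⁻¹ a_j⁻¹ w) ∏_{j∉A}(q⁻¹ − q a_j⁻¹ w) / ∏_j (1 − a_j⁻¹ w)`,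
the eigenvalue of `φ⁻(u)` on `V_A` expanded at `u = ∞`. -/
noncomputable def gm (A : Finset (Fin n)) : PowerSeries ℂ :=
  (∏ j ∈ A, (PowerSeries.C q - PowerSeries.C (q⁻¹ * (a j)⁻¹) * PowerSeries.X))
  * (∏ j ∈ Aᶜ, (PowerSeries.C q⁻¹ - PowerSeries.C (q * (a j)⁻¹) * PowerSeries.X))
  * (∏ j : Fin n, (1 - PowerSeries.C ((a j)⁻¹) * PowerSeries.X))⁻¹

/-- `φ⁺_m`: the coefficient of `u^m` (`m ≥ 0`) in the diagonal action of `φ⁺(u)`. -/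
noncomputable def Php (m : ℤ) : Matrix (Finset (Fin n)) (Finset (Fin n)) ℂ :=
  fun B A => if B = A ∧ 0 ≤ m then PowerSeries.coeff m.toNat (gp n q a A) else 0

/-- `φ⁻_m`: the coefficient of `u^m` (`m ≤ 0`) in the diagonal action of `φ⁻(u)`. -/
noncomputable def Phm (m : ℤ) : Matrix (Finset (Fin n)) (Finset (Fin n)) ℂ :=
  fun B A => if B = A ∧ m ≤ 0 then PowerSeries.coeff (-m).toNat (gm n q a A) else 0

variable {n q a}

noncomputable def lin (b c : ℂ) : Polynomial ℂ := Polynomial.C b + Polynomial.C c * Polynomial.X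

lemma lin_natDegree_le (b c : ℂ) : (lin b c).natDegree ≤ 1 := by
  unfold lin
  refine le_trans (Polynomial.natDegree_add_le _ _) ?_
  simp [Polynomial.natDegree_C_mul_le]
  exact le_trans (Polynomial.natDegree_mul_le) (by simp)

lemma linProd_natDegree_le {ι : Type*} (s : Finset ι) (b c : ι → ℂ) :
    (∏ k ∈ s, lin (b k) (c k)).natDegree ≤ s.card := by
  refine le_trans (Polynomial.natDegree_prod_le s _) ?_
  calc ∑ k ∈ s, (lin (b k) (c k)).natDegree ≤ ∑ k ∈ s, 1 :=
        Finset.sum_le_sum fun k _ => lin_natDegree_le _ _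
    _ = s.card := by simp

lemma linProd_coeff_card {ι : Type*} [DecidableEq ι] (s : Finset ι) (b c : ι → ℂ) :
    (∏ k ∈ s, lin (b k) (c k)).coeff s.card = ∏ k ∈ s, c k := by
  induction s using Finset.induction_on with
  | empty => simp
  | @insert x s hx ih =>
    rw [Finset.prod_insert hx, Finset.card_insert_of_notMem hx, Finset.prod_insert hx, ← ih]
    have hdeg : (∏ k ∈ s, lin (b k) (c k)).natDegree ≤ s.card := linProd_natDegree_le s b c
    rw [lin, add_mul, Polynomial.coeff_add, Polynomial.coeff_C_mul,
      Polynomial.coeff_eq_zero_of_natDegree_lt (lt_of_le_of_lt hdeg (Nat.lt_succ_self _)),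
      mul_zero, zero_add, mul_assoc, Polynomial.coeff_C_mul, Polynomial.coeff_X_mul]

lemma lin_eval (b c x : ℂ) : (lin b c).eval x = b + c * x := by simp [lin]

/-- `∏_{k∉A}(a_j q − a_k q⁻¹)/(a_j − a_k)` -/
noncomputable def cpc (q : ℂ) (a : Fin n → ℂ) (A : Finset (Fin n)) (j : Fin n) : ℂ :=
  ∏ k ∈ Aᶜ, (a j * q - a k * q⁻¹) / (a j - a k)

/-- `∏_{k∈A}(a_k q − a_j q⁻¹)/(a_k − a_j)` -/
noncomputable def cmc (q : ℂ) (a : Fin n → ℂ) (A : Finset (Fin n)) (j : Fin n) : ℂ :=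
  ∏ k ∈ A, (a k * q - a j * q⁻¹) / (a k - a j)

/-- residues -/
noncomputable def RR (q : ℂ) (a : Fin n → ℂ) (A : Finset (Fin n)) (j : Fin n) : ℂ :=
  if j ∈ A then -((q - q⁻¹) * (cmc q a (A.erase j) j * cpc q a A j))
  else (q - q⁻¹) * (cpc q a (insert j A) j * cmc q a A j)

/-- constant term at infinity -/
noncomputable def cc (q : ℂ) (A : Finset (Fin n)) : ℂ :=
  q ^ ((A.card : ℤ) - ((Aᶜ : Finset (Fin n)).card : ℤ))

lemma univ_erase_eq_union {A : Finset (Fin n)} {i : Fin n} (hi : i ∈ A) :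
    (univ : Finset (Fin n)).erase i = (A.erase i) ∪ Aᶜ := by
  ext k
  simp only [mem_erase, mem_univ, and_true, mem_union, mem_compl]
  by_cases hk : k ∈ A
  · constructor
    · intro h; exact Or.inl ⟨h, hk⟩
    · rintro (⟨h, _⟩ | h); exact h; exact absurd hk h
  · constructor
    · intro _; exact Or.inr hk
    · intro _; rintro rfl; exact hk hi

lemma prod_univ_erase_split {A : Finset (Fin n)} {i : Fin n} (hi : i ∈ A) (f : Fin n → ℂ) :
    ∏ k ∈ (univ : Finset (Fin n)).erase i, f k = (∏ k ∈ A.erase i, f k) * ∏ k ∈ Aᶜ, f k := by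
  rw [univ_erase_eq_union hi, Finset.prod_union]
  exact Finset.disjoint_left.mpr fun k hk hk' => (mem_compl.mp hk') (mem_of_mem_erase hk)

lemma univ_erase_eq_union' {A : Finset (Fin n)} {i : Fin n} (hi : i ∉ A) :
    (univ : Finset (Fin n)).erase i = A ∪ (Aᶜ.erase i) := by
  ext k
  simp only [mem_erase, mem_univ, and_true, mem_union, mem_compl]
  by_cases hk : k ∈ A
  · constructor
    · intro _; exact Or.inl hk
    · intro _; rintro rfl; exact hi hk
  · constructor
    · intro h; exact Or.inr ⟨h, hk⟩
    · rintro (h | ⟨h, _⟩); exact absurd h hk; exact h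

lemma prod_univ_erase_split' {A : Finset (Fin n)} {i : Fin n} (hi : i ∉ A) (f : Fin n → ℂ) :
    ∏ k ∈ (univ : Finset (Fin n)).erase i, f k = (∏ k ∈ A, f k) * ∏ k ∈ Aᶜ.erase i, f k := by
  rw [univ_erase_eq_union' hi, Finset.prod_union]
  exact Finset.disjoint_left.mpr fun k hk hk' => (mem_compl.mp (mem_of_mem_erase hk')) hk

lemma polyA (hq : q ≠ 0) (ha0 : ∀ i, a i ≠ 0) (ha : Function.Injective a) (A : Finset (Fin n)) :
    (∏ j ∈ A, lin q⁻¹ (-(q * a j))) * (∏ j ∈ Aᶜ, lin q (-(q⁻¹ * a j)))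
      = Polynomial.C (cc q A) * (∏ j : Fin n, lin 1 (-(a j)))
        + ∑ j : Fin n, Polynomial.C (RR q a A j) * (∏ k ∈ univ.erase j, lin 1 (-(a k))) := by
  rcases Nat.eq_zero_or_pos n with hn | hn
  · subst hn
    have hA : A = ∅ := Subsingleton.elim _ _
    subst hA
    simp [cc]
  -- general case
  rw [← sub_eq_zero]
  set P : Polynomial ℂ := _ - _ with hP
  by_cases hP0 : P = 0
  · exact hP0
  have hinj : Function.Injective (fun j : Fin n => (a j)⁻¹) :=
    fun i j h => ha (inv_injective h)
  have hA1 : (∏ j ∈ A, lin q⁻¹ (-(q * a j))) * (∏ j ∈ Aᶜ, lin q (-(q⁻¹ * a j)))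
      = ∏ j : Fin n, lin (if j ∈ A then q⁻¹ else q)
          (if j ∈ A then -(q * a j) else -(q⁻¹ * a j)) := by
    rw [← prod_mul_prod_compl A (fun j => lin (if j ∈ A then q⁻¹ else q)
      (if j ∈ A then -(q * a j) else -(q⁻¹ * a j)))]
    exact congrArg₂ (· * ·)
      (prod_congr rfl fun k hk => by rw [if_pos hk, if_pos hk])
      (prod_congr rfl fun k hk => by
        rw [if_neg (mem_compl.mp hk), if_neg (mem_compl.mp hk)])
  have hcoeff : ∀ m : ℕ, n ≤ m → P.coeff m = 0 := by
    intro m hm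
    have hcardu : (univ : Finset (Fin n)).card = n := by simp
    rw [hP, Polynomial.coeff_sub, sub_eq_zero, hA1, Polynomial.coeff_add,
      Polynomial.coeff_C_mul, Polynomial.finset_sum_coeff]
    have hsum0 : ∀ j ∈ (univ : Finset (Fin n)),
        (Polynomial.C (RR q a A j) * ∏ k ∈ univ.erase j, lin 1 (-(a k))).coeff m = 0 := by
      intro j _
      rw [Polynomial.coeff_C_mul,
        Polynomial.coeff_eq_zero_of_natDegree_lt
          (lt_of_le_of_lt (le_trans (linProd_natDegree_le _ _ _) (by rw [card_erase_of_mem (mem_univ j), hcardu])) (lt_of_lt_of_le (by omega : n - 1 < n) hm)),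
        mul_zero]
    rw [Finset.sum_eq_zero hsum0, add_zero]
    rcases eq_or_lt_of_le hm with hmn | hmn
    · -- m = n : leading coefficients
      subst hmn
      have hcL := linProd_coeff_card (univ : Finset (Fin n))
        (fun j => if j ∈ A then q⁻¹ else q)
        (fun j => if j ∈ A then -(q * a j) else -(q⁻¹ * a j))
      have hcR := linProd_coeff_card (univ : Finset (Fin n)) (fun _ => (1:ℂ)) (fun j => -(a j))
      rw [hcardu] at hcL hcR
      rw [hcL, hcR]
      have hs1 : ∏ j : Fin n, (if j ∈ A then -(q * a j) else -(q⁻¹ * a j))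
          = (∏ j ∈ A, -(q * a j)) * ∏ j ∈ Aᶜ, -(q⁻¹ * a j) := by
        rw [← prod_mul_prod_compl A (fun j => if j ∈ A then -(q * a j) else -(q⁻¹ * a j))]
        exact congrArg₂ (· * ·) (prod_congr rfl fun k hk => if_pos hk)
          (prod_congr rfl fun k hk => if_neg (mem_compl.mp hk))
      have hs2 : ∏ j : Fin n, -(a j) = (∏ j ∈ A, -(a j)) * ∏ j ∈ Aᶜ, -(a j) :=
        (prod_mul_prod_compl A _).symm
      rw [hs1, hs2]
      have e1 : ∏ j ∈ A, -(q * a j) = q ^ A.card * ∏ j ∈ A, -(a j) := by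
        rw [← prod_const, ← prod_mul_distrib]; exact prod_congr rfl fun k _ => by ring
      have e2 : ∏ j ∈ Aᶜ, -(q⁻¹ * a j) = (q⁻¹) ^ Aᶜ.card * ∏ j ∈ Aᶜ, -(a j) := by
        rw [← prod_const, ← prod_mul_distrib]; exact prod_congr rfl fun k _ => by ring
      have e3 : cc q A = q ^ A.card * (q⁻¹) ^ Aᶜ.card := by
        rw [cc, zpow_sub₀ hq, zpow_natCast, zpow_natCast, div_eq_mul_inv, inv_pow]
      rw [e1, e2, e3]; ring
    · -- m > n
      have d1 : (∏ j : Fin n, lin (if j ∈ A then q⁻¹ else q)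
          (if j ∈ A then -(q * a j) else -(q⁻¹ * a j))).natDegree < m :=
        lt_of_le_of_lt (le_trans (linProd_natDegree_le _ _ _) (le_of_eq hcardu)) hmn
      have d2 : (∏ j : Fin n, lin 1 (-(a j))).natDegree < m :=
        lt_of_le_of_lt (le_trans (linProd_natDegree_le _ _ _) (le_of_eq hcardu)) hmn
      rw [Polynomial.coeff_eq_zero_of_natDegree_lt d1,
        Polynomial.coeff_eq_zero_of_natDegree_lt d2, mul_zero]
  have heval : ∀ i : Fin n, P.eval ((a i)⁻¹) = 0 := by
    intro i
    have hz : (lin 1 (-(a i))).eval ((a i)⁻¹) = 0 := by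
      rw [lin_eval]; field_simp [ha0 i]; ring
    rw [hP, Polynomial.eval_sub, sub_eq_zero, Polynomial.eval_add, Polynomial.eval_mul,
      Polynomial.eval_mul, Polynomial.eval_C, Polynomial.eval_prod,
      Polynomial.eval_prod, Polynomial.eval_prod, Polynomial.eval_finset_sum]
    rw [Finset.prod_eq_zero (mem_univ i) hz, mul_zero, zero_add]
    rw [Finset.sum_eq_single i (fun j _ hji => by
        rw [Polynomial.eval_mul, Polynomial.eval_prod,
          Finset.prod_eq_zero (mem_erase.mpr ⟨Ne.symm hji, mem_univ i⟩) hz, mul_zero])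
      (fun h => absurd (mem_univ i) h)]
    rw [Polynomial.eval_mul, Polynomial.eval_C, Polynomial.eval_prod]
    by_cases hi : i ∈ A
    · rw [RR, if_pos hi, ← Finset.mul_prod_erase A _ hi, prod_univ_erase_split hi, cmc, cpc]
      have h1 : ∀ k ∈ A.erase i, (lin q⁻¹ (-(q * a k))).eval (a i)⁻¹
          = ((a k * q - a i * q⁻¹) / (a k - a i)) * ((lin 1 (-(a k))).eval (a i)⁻¹) := by
        intro k hk
        have hki : a k - a i ≠ 0 :=
          sub_ne_zero_of_ne (fun h => (mem_erase.mp hk).1 (ha h))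
        rw [lin_eval, lin_eval]
        field_simp [ha0 i]
        ring
      have h2 : ∀ k ∈ Aᶜ, (lin q (-(q⁻¹ * a k))).eval (a i)⁻¹
          = ((a i * q - a k * q⁻¹) / (a i - a k)) * ((lin 1 (-(a k))).eval (a i)⁻¹) := by
        intro k hk
        have hki : a i - a k ≠ 0 :=
          sub_ne_zero_of_ne (fun h => (mem_compl.mp hk) (ha h ▸ hi))
        rw [lin_eval, lin_eval]
        field_simp [ha0 i]
        ring
      rw [prod_congr rfl h1, prod_congr rfl h2, prod_mul_distrib, prod_mul_distrib]
      have hev : (lin q⁻¹ (-(q * a i))).eval (a i)⁻¹ = -(q - q⁻¹) := by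
        rw [lin_eval]; field_simp [ha0 i]; ring
      rw [hev]; ring
    · rw [RR, if_neg hi, ← Finset.mul_prod_erase Aᶜ _ (mem_compl.mpr hi),
        prod_univ_erase_split' hi, cmc, cpc, compl_insert]
      have h1 : ∀ k ∈ A, (lin q⁻¹ (-(q * a k))).eval (a i)⁻¹
          = ((a k * q - a i * q⁻¹) / (a k - a i)) * ((lin 1 (-(a k))).eval (a i)⁻¹) := by
        intro k hk
        have hki : a k - a i ≠ 0 :=
          sub_ne_zero_of_ne (fun h => hi (ha h ▸ hk))
        rw [lin_eval, lin_eval]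
        field_simp [ha0 i]
        ring
      have h2 : ∀ k ∈ Aᶜ.erase i, (lin q (-(q⁻¹ * a k))).eval (a i)⁻¹
          = ((a i * q - a k * q⁻¹) / (a i - a k)) * ((lin 1 (-(a k))).eval (a i)⁻¹) := by
        intro k hk
        have hki : a i - a k ≠ 0 :=
          sub_ne_zero_of_ne (fun h => (mem_erase.mp hk).1 (ha h.symm))
        rw [lin_eval, lin_eval]
        field_simp [ha0 i]
        ring
      rw [prod_congr rfl h1, prod_congr rfl h2, prod_mul_distrib, prod_mul_distrib]
      have hev : (lin q (-(q⁻¹ * a i))).eval (a i)⁻¹ = q - q⁻¹ := by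
        rw [lin_eval]; field_simp [ha0 i]; ring
      rw [hev]; ring
  exact Polynomial.eq_zero_of_natDegree_lt_card_of_eval_eq_zero P hinj heval
    (lt_of_lt_of_le ((Polynomial.natDegree_lt_iff_degree_lt hP0).mpr
      ((Polynomial.degree_lt_iff_coeff_zero _ _).mpr hcoeff))
      (le_of_eq (Fintype.card_fin n).symm))

lemma sumRR (hq : q ≠ 0) (ha0 : ∀ i, a i ≠ 0) (ha : Function.Injective a)
    (A : Finset (Fin n)) :
    cc q A + ∑ j : Fin n, RR q a A j
      = q ^ (((Aᶜ : Finset (Fin n)).card : ℤ) - (A.card : ℤ)) := by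
  have h := congrArg (Polynomial.eval 0) (polyA hq ha0 ha A)
  simp only [Polynomial.eval_mul, Polynomial.eval_add, Polynomial.eval_prod, lin_eval,
    Polynomial.eval_C, Polynomial.eval_finset_sum, mul_zero, add_zero, prod_const,
    prod_const_one, mul_one, one_pow] at h
  rw [zpow_sub₀ hq, zpow_natCast, zpow_natCast, div_eq_mul_inv, ← inv_pow, ← h, mul_comm]

lemma polyB (hq : q ≠ 0) (ha0 : ∀ i, a i ≠ 0) (ha : Function.Injective a) (A : Finset (Fin n)) :
    (∏ j ∈ A, lin q (-(q⁻¹ * (a j)⁻¹))) * (∏ j ∈ Aᶜ, lin q⁻¹ (-(q * (a j)⁻¹)))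
      = Polynomial.C (cc q A + ∑ j : Fin n, RR q a A j) * (∏ j : Fin n, lin 1 (-(a j)⁻¹))
        - ∑ j : Fin n, Polynomial.C (RR q a A j) * (∏ k ∈ univ.erase j, lin 1 (-(a k)⁻¹)) := by
  rcases Nat.eq_zero_or_pos n with hn | hn
  · subst hn
    have hA : A = ∅ := Subsingleton.elim _ _
    subst hA
    simp [cc]
  rw [← sub_eq_zero]
  set P : Polynomial ℂ := _ - _ with hP
  by_cases hP0 : P = 0
  · exact hP0
  have hA1 : (∏ j ∈ A, lin q (-(q⁻¹ * (a j)⁻¹))) * (∏ j ∈ Aᶜ, lin q⁻¹ (-(q * (a j)⁻¹)))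
      = ∏ j : Fin n, lin (if j ∈ A then q else q⁻¹)
          (if j ∈ A then -(q⁻¹ * (a j)⁻¹) else -(q * (a j)⁻¹)) := by
    rw [← prod_mul_prod_compl A (fun j => lin (if j ∈ A then q else q⁻¹)
      (if j ∈ A then -(q⁻¹ * (a j)⁻¹) else -(q * (a j)⁻¹)))]
    exact congrArg₂ (· * ·)
      (prod_congr rfl fun k hk => by rw [if_pos hk, if_pos hk])
      (prod_congr rfl fun k hk => by
        rw [if_neg (mem_compl.mp hk), if_neg (mem_compl.mp hk)])
  have hcoeff : ∀ m : ℕ, n ≤ m → P.coeff m = 0 := by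
    intro m hm
    have hcardu : (univ : Finset (Fin n)).card = n := by simp
    rw [hP, Polynomial.coeff_sub, sub_eq_zero, hA1, Polynomial.coeff_sub,
      Polynomial.coeff_C_mul, Polynomial.finset_sum_coeff]
    have hsum0 : ∀ j ∈ (univ : Finset (Fin n)),
        (Polynomial.C (RR q a A j) * ∏ k ∈ univ.erase j, lin 1 (-(a k)⁻¹)).coeff m = 0 := by
      intro j _
      rw [Polynomial.coeff_C_mul,
        Polynomial.coeff_eq_zero_of_natDegree_lt
          (lt_of_le_of_lt (le_trans (linProd_natDegree_le _ _ _)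
            (by rw [card_erase_of_mem (mem_univ j), hcardu]))
            (lt_of_lt_of_le (by omega : n - 1 < n) hm)),
        mul_zero]
    rw [Finset.sum_eq_zero hsum0, sub_zero]
    rcases eq_or_lt_of_le hm with hmn | hmn
    · subst hmn
      have hcL := linProd_coeff_card (univ : Finset (Fin n))
        (fun j => if j ∈ A then q else q⁻¹)
        (fun j => if j ∈ A then -(q⁻¹ * (a j)⁻¹) else -(q * (a j)⁻¹))
      have hcR := linProd_coeff_card (univ : Finset (Fin n)) (fun _ => (1:ℂ))
        (fun j => -(a j)⁻¹)
      rw [hcardu] at hcL hcR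
      rw [hcL, hcR]
      have hs1 : ∏ j : Fin n, (if j ∈ A then -(q⁻¹ * (a j)⁻¹) else -(q * (a j)⁻¹))
          = (∏ j ∈ A, -(q⁻¹ * (a j)⁻¹)) * ∏ j ∈ Aᶜ, -(q * (a j)⁻¹) := by
        rw [← prod_mul_prod_compl A
          (fun j => if j ∈ A then -(q⁻¹ * (a j)⁻¹) else -(q * (a j)⁻¹))]
        exact congrArg₂ (· * ·) (prod_congr rfl fun k hk => if_pos hk)
          (prod_congr rfl fun k hk => if_neg (mem_compl.mp hk))
      have hs2 : ∏ j : Fin n, -(a j)⁻¹ = (∏ j ∈ A, -(a j)⁻¹) * ∏ j ∈ Aᶜ, -(a j)⁻¹ :=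
        (prod_mul_prod_compl A _).symm
      rw [hs1, hs2, sumRR hq ha0 ha A]
      have e1 : ∏ j ∈ A, -(q⁻¹ * (a j)⁻¹) = (q⁻¹) ^ A.card * ∏ j ∈ A, -(a j)⁻¹ := by
        rw [← prod_const, ← prod_mul_distrib]; exact prod_congr rfl fun k _ => by ring
      have e2 : ∏ j ∈ Aᶜ, -(q * (a j)⁻¹) = q ^ Aᶜ.card * ∏ j ∈ Aᶜ, -(a j)⁻¹ := by
        rw [← prod_const, ← prod_mul_distrib]; exact prod_congr rfl fun k _ => by ring
      have e3 : q ^ (((Aᶜ : Finset (Fin n)).card : ℤ) - (A.card : ℤ))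
          = q ^ Aᶜ.card * (q⁻¹) ^ A.card := by
        rw [zpow_sub₀ hq, zpow_natCast, zpow_natCast, div_eq_mul_inv, inv_pow]
      rw [e1, e2, e3]; ring
    · have d1 : (∏ j : Fin n, lin (if j ∈ A then q else q⁻¹)
          (if j ∈ A then -(q⁻¹ * (a j)⁻¹) else -(q * (a j)⁻¹))).natDegree < m :=
        lt_of_le_of_lt (le_trans (linProd_natDegree_le _ _ _) (le_of_eq hcardu)) hmn
      have d2 : (∏ j : Fin n, lin 1 (-(a j)⁻¹)).natDegree < m :=
        lt_of_le_of_lt (le_trans (linProd_natDegree_le _ _ _) (le_of_eq hcardu)) hmn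
      rw [Polynomial.coeff_eq_zero_of_natDegree_lt d1,
        Polynomial.coeff_eq_zero_of_natDegree_lt d2, mul_zero]
  have heval : ∀ i : Fin n, P.eval (a i) = 0 := by
    intro i
    have hz : (lin 1 (-(a i)⁻¹)).eval (a i) = 0 := by
      rw [lin_eval]; field_simp [ha0 i]; ring
    rw [hP, Polynomial.eval_sub, sub_eq_zero, Polynomial.eval_sub, Polynomial.eval_mul,
      Polynomial.eval_mul, Polynomial.eval_C, Polynomial.eval_prod,
      Polynomial.eval_prod, Polynomial.eval_prod, Polynomial.eval_finset_sum]
    rw [Finset.prod_eq_zero (mem_univ i) hz, mul_zero, zero_sub]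
    rw [Finset.sum_eq_single i (fun j _ hji => by
        rw [Polynomial.eval_mul, Polynomial.eval_prod,
          Finset.prod_eq_zero (mem_erase.mpr ⟨Ne.symm hji, mem_univ i⟩) hz, mul_zero])
      (fun h => absurd (mem_univ i) h)]
    rw [Polynomial.eval_mul, Polynomial.eval_C, Polynomial.eval_prod]
    by_cases hi : i ∈ A
    · rw [RR, if_pos hi, ← Finset.mul_prod_erase A _ hi, prod_univ_erase_split hi, cmc, cpc]
      have h1 : ∀ k ∈ A.erase i, (lin q (-(q⁻¹ * (a k)⁻¹))).eval (a i)
          = ((a k * q - a i * q⁻¹) / (a k - a i)) * ((lin 1 (-(a k)⁻¹)).eval (a i)) := by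
        intro k hk
        have hki : a k - a i ≠ 0 :=
          sub_ne_zero_of_ne (fun h => (mem_erase.mp hk).1 (ha h))
        rw [lin_eval, lin_eval]
        field_simp [ha0 k]
        ring
      have h2 : ∀ k ∈ Aᶜ, (lin q⁻¹ (-(q * (a k)⁻¹))).eval (a i)
          = ((a i * q - a k * q⁻¹) / (a i - a k)) * ((lin 1 (-(a k)⁻¹)).eval (a i)) := by
        intro k hk
        have hki : a i - a k ≠ 0 :=
          sub_ne_zero_of_ne (fun h => (mem_compl.mp hk) (ha h ▸ hi))
        rw [lin_eval, lin_eval]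
        field_simp [ha0 k]
        ring
      rw [prod_congr rfl h1, prod_congr rfl h2, prod_mul_distrib, prod_mul_distrib]
      have hev : (lin q (-(q⁻¹ * (a i)⁻¹))).eval (a i) = q - q⁻¹ := by
        rw [lin_eval]; field_simp [ha0 i]; ring
      rw [hev]; ring
    · rw [RR, if_neg hi, ← Finset.mul_prod_erase Aᶜ _ (mem_compl.mpr hi),
        prod_univ_erase_split' hi, cmc, cpc, compl_insert]
      have h1 : ∀ k ∈ A, (lin q (-(q⁻¹ * (a k)⁻¹))).eval (a i)
          = ((a k * q - a i * q⁻¹) / (a k - a i)) * ((lin 1 (-(a k)⁻¹)).eval (a i)) := by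
        intro k hk
        have hki : a k - a i ≠ 0 :=
          sub_ne_zero_of_ne (fun h => hi (ha h ▸ hk))
        rw [lin_eval, lin_eval]
        field_simp [ha0 k]
        ring
      have h2 : ∀ k ∈ Aᶜ.erase i, (lin q⁻¹ (-(q * (a k)⁻¹))).eval (a i)
          = ((a i * q - a k * q⁻¹) / (a i - a k)) * ((lin 1 (-(a k)⁻¹)).eval (a i)) := by
        intro k hk
        have hki : a i - a k ≠ 0 :=
          sub_ne_zero_of_ne (fun h => (mem_erase.mp hk).1 (ha h.symm))
        rw [lin_eval, lin_eval]
        field_simp [ha0 k]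
        ring
      rw [prod_congr rfl h1, prod_congr rfl h2, prod_mul_distrib, prod_mul_distrib]
      have hev : (lin q⁻¹ (-(q * (a i)⁻¹))).eval (a i) = -(q - q⁻¹) := by
        rw [lin_eval]; field_simp [ha0 i]; ring
      rw [hev]; ring
  exact Polynomial.eq_zero_of_natDegree_lt_card_of_eval_eq_zero P ha heval
    (lt_of_lt_of_le ((Polynomial.natDegree_lt_iff_degree_lt hP0).mpr
      ((Polynomial.degree_lt_iff_coeff_zero _ _).mpr hcoeff))
      (le_of_eq (Fintype.card_fin n).symm))


noncomputable def geo (x : ℂ) : PowerSeries ℂ := PowerSeries.mk fun m => x ^ m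

lemma geo_mul (x : ℂ) : (1 - PowerSeries.C x * PowerSeries.X) * geo x = 1 := by
  ext m
  rw [sub_mul, one_mul, map_sub, mul_assoc]
  cases m with
  | zero => simp [geo]
  | succ k => simp [geo, PowerSeries.coeff_C_mul, PowerSeries.coeff_succ_X_mul, pow_succ,
      mul_comm]

lemma TC (x : ℂ) : (Polynomial.coeToPowerSeries.ringHom (Polynomial.C x) : PowerSeries ℂ)
    = PowerSeries.C x := by
  simp [Polynomial.coeToPowerSeries.ringHom_apply]

lemma Tlin (b c : ℂ) : (Polynomial.coeToPowerSeries.ringHom (lin b c) : PowerSeries ℂ)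
    = PowerSeries.C b + PowerSeries.C c * PowerSeries.X := by
  simp [lin, Polynomial.coeToPowerSeries.ringHom_apply]

lemma constCoeff_D (b : Fin n → ℂ) :
    PowerSeries.constantCoeff (∏ j : Fin n, (1 - PowerSeries.C (b j) * PowerSeries.X)) = 1 := by
  rw [map_prod]
  simp

lemma D_mul_inv (b : Fin n → ℂ) :
    (∏ j : Fin n, (1 - PowerSeries.C (b j) * PowerSeries.X)) *
      (∏ j : Fin n, (1 - PowerSeries.C (b j) * PowerSeries.X))⁻¹ = 1 :=
  PowerSeries.mul_inv_cancel _ (by rw [constCoeff_D]; exact one_ne_zero)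

lemma Dj_mul_inv (b : Fin n → ℂ) (j : Fin n) :
    (∏ k ∈ univ.erase j, (1 - PowerSeries.C (b k) * PowerSeries.X)) *
      (∏ k : Fin n, (1 - PowerSeries.C (b k) * PowerSeries.X))⁻¹ = geo (b j) := by
  have hsplit : (∏ k : Fin n, (1 - PowerSeries.C (b k) * PowerSeries.X))
      = (1 - PowerSeries.C (b j) * PowerSeries.X) *
        ∏ k ∈ univ.erase j, (1 - PowerSeries.C (b k) * PowerSeries.X) :=
    (Finset.mul_prod_erase univ _ (mem_univ j)).symm
  have h1 : (∏ k ∈ univ.erase j, (1 - PowerSeries.C (b k) * PowerSeries.X))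
      = geo (b j) * ∏ k : Fin n, (1 - PowerSeries.C (b k) * PowerSeries.X) := by
    rw [hsplit, ← mul_assoc, mul_comm (geo (b j)), geo_mul, one_mul]
  rw [h1, mul_assoc, D_mul_inv, mul_one]


lemma Tlin' (b c : ℂ) : (Polynomial.coeToPowerSeries.ringHom (lin b (-c)) : PowerSeries ℂ)
    = PowerSeries.C b - PowerSeries.C c * PowerSeries.X := by
  rw [Tlin, map_neg, neg_mul, ← sub_eq_add_neg]

lemma Tlin1 (c : ℂ) : (Polynomial.coeToPowerSeries.ringHom (lin 1 (-c)) : PowerSeries ℂ)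
    = 1 - PowerSeries.C c * PowerSeries.X := by
  rw [Tlin', _root_.map_one]

/-- partial fraction expansion of `gp` -/
lemma psA (hq : q ≠ 0) (ha0 : ∀ i, a i ≠ 0) (ha : Function.Injective a) (A : Finset (Fin n)) :
    gp n q a A = PowerSeries.C (cc q A)
      + ∑ j : Fin n, PowerSeries.C (RR q a A j) * geo (a j) := by
  have hpoly := congrArg (Polynomial.coeToPowerSeries.ringHom (R := ℂ)) (polyA hq ha0 ha A)
  have hTN : (Polynomial.coeToPowerSeries.ringHom
        ((∏ j ∈ A, lin q⁻¹ (-(q * a j))) * ∏ j ∈ Aᶜ, lin q (-(q⁻¹ * a j))) : PowerSeries ℂ)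
      = (∏ j ∈ A, (PowerSeries.C q⁻¹ - PowerSeries.C (q * a j) * PowerSeries.X))
        * ∏ j ∈ Aᶜ, (PowerSeries.C q - PowerSeries.C (q⁻¹ * a j) * PowerSeries.X) := by
    rw [_root_.map_mul, map_prod, map_prod]
    exact congrArg₂ (· * ·) (prod_congr rfl fun k _ => Tlin' _ _)
      (prod_congr rfl fun k _ => Tlin' _ _)
  have hTR : (Polynomial.coeToPowerSeries.ringHom
        (Polynomial.C (cc q A) * (∏ j : Fin n, lin 1 (-(a j)))
          + ∑ j : Fin n, Polynomial.C (RR q a A j)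
            * (∏ k ∈ univ.erase j, lin 1 (-(a k)))) : PowerSeries ℂ)
      = PowerSeries.C (cc q A) * (∏ j : Fin n, (1 - PowerSeries.C (a j) * PowerSeries.X))
        + ∑ j : Fin n, PowerSeries.C (RR q a A j)
          * ∏ k ∈ univ.erase j, (1 - PowerSeries.C (a k) * PowerSeries.X) := by
    rw [map_add, _root_.map_mul, TC, map_prod, map_sum]
    congr 1
    · exact congrArg _ (prod_congr rfl fun k _ => Tlin1 _)
    refine Finset.sum_congr rfl fun j _ => ?_
    rw [_root_.map_mul, TC, map_prod]
    exact congrArg _ (prod_congr rfl fun k _ => Tlin1 _)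
  rw [hTN, hTR] at hpoly
  have hgp : gp n q a A
      = ((∏ j ∈ A, (PowerSeries.C q⁻¹ - PowerSeries.C (q * a j) * PowerSeries.X))
      * (∏ j ∈ Aᶜ, (PowerSeries.C q - PowerSeries.C (q⁻¹ * a j) * PowerSeries.X)))
      * (∏ j : Fin n, (1 - PowerSeries.C (a j) * PowerSeries.X))⁻¹ := by
    rw [gp]
  rw [hgp, hpoly, add_mul, mul_assoc, D_mul_inv, mul_one, Finset.sum_mul]
  congr 1
  refine Finset.sum_congr rfl fun j _ => ?_
  rw [mul_assoc, Dj_mul_inv]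

lemma coeffA (hq : q ≠ 0) (ha0 : ∀ i, a i ≠ 0) (ha : Function.Injective a) (A : Finset (Fin n))
    (m : ℕ) :
    PowerSeries.coeff m (gp n q a A)
      = (if m = 0 then cc q A else 0) + ∑ j : Fin n, RR q a A j * (a j) ^ m := by
  rw [psA hq ha0 ha A, map_add, map_sum, PowerSeries.coeff_C]
  congr 1
  exact Finset.sum_congr rfl fun j _ => by rw [PowerSeries.coeff_C_mul, geo, PowerSeries.coeff_mk]

/-- partial fraction expansion of `gm` -/
lemma psB (hq : q ≠ 0) (ha0 : ∀ i, a i ≠ 0) (ha : Function.Injective a) (A : Finset (Fin n)) :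
    gm n q a A = PowerSeries.C (cc q A + ∑ j : Fin n, RR q a A j)
      - ∑ j : Fin n, PowerSeries.C (RR q a A j) * geo ((a j)⁻¹) := by
  have hpoly := congrArg (Polynomial.coeToPowerSeries.ringHom (R := ℂ)) (polyB hq ha0 ha A)
  have hTN : (Polynomial.coeToPowerSeries.ringHom
        ((∏ j ∈ A, lin q (-(q⁻¹ * (a j)⁻¹))) * ∏ j ∈ Aᶜ, lin q⁻¹ (-(q * (a j)⁻¹))) : PowerSeries ℂ)
      = (∏ j ∈ A, (PowerSeries.C q - PowerSeries.C (q⁻¹ * (a j)⁻¹) * PowerSeries.X))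
        * ∏ j ∈ Aᶜ, (PowerSeries.C q⁻¹ - PowerSeries.C (q * (a j)⁻¹) * PowerSeries.X) := by
    rw [_root_.map_mul, map_prod, map_prod]
    exact congrArg₂ (· * ·) (prod_congr rfl fun k _ => Tlin' _ _)
      (prod_congr rfl fun k _ => Tlin' _ _)
  have hTR : (Polynomial.coeToPowerSeries.ringHom
        (Polynomial.C (cc q A + ∑ j : Fin n, RR q a A j) * (∏ j : Fin n, lin 1 (-(a j)⁻¹))
          - ∑ j : Fin n, Polynomial.C (RR q a A j)
            * (∏ k ∈ univ.erase j, lin 1 (-(a k)⁻¹))) : PowerSeries ℂ)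
      = PowerSeries.C (cc q A + ∑ j : Fin n, RR q a A j)
          * (∏ j : Fin n, (1 - PowerSeries.C ((a j)⁻¹) * PowerSeries.X))
        - ∑ j : Fin n, PowerSeries.C (RR q a A j)
          * ∏ k ∈ univ.erase j, (1 - PowerSeries.C ((a k)⁻¹) * PowerSeries.X) := by
    rw [map_sub, _root_.map_mul, TC, map_prod, map_sum]
    congr 1
    · exact congrArg _ (prod_congr rfl fun k _ => Tlin1 _)
    refine Finset.sum_congr rfl fun j _ => ?_
    rw [_root_.map_mul, TC, map_prod]
    exact congrArg _ (prod_congr rfl fun k _ => Tlin1 _)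
  rw [hTN, hTR] at hpoly
  have hgm : gm n q a A
      = ((∏ j ∈ A, (PowerSeries.C q - PowerSeries.C (q⁻¹ * (a j)⁻¹) * PowerSeries.X))
      * (∏ j ∈ Aᶜ, (PowerSeries.C q⁻¹ - PowerSeries.C (q * (a j)⁻¹) * PowerSeries.X)))
      * (∏ j : Fin n, (1 - PowerSeries.C ((a j)⁻¹) * PowerSeries.X))⁻¹ := by
    rw [gm]
  rw [hgm, hpoly, sub_mul, mul_assoc, D_mul_inv, mul_one, Finset.sum_mul]
  congr 1
  refine Finset.sum_congr rfl fun j _ => ?_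
  rw [mul_assoc, Dj_mul_inv]

lemma coeffB (hq : q ≠ 0) (ha0 : ∀ i, a i ≠ 0) (ha : Function.Injective a) (A : Finset (Fin n))
    (m : ℕ) :
    PowerSeries.coeff m (gm n q a A)
      = (if m = 0 then cc q A + ∑ j : Fin n, RR q a A j else 0)
        - ∑ j : Fin n, RR q a A j * ((a j)⁻¹) ^ m := by
  rw [psB hq ha0 ha A, map_sub, map_sum, PowerSeries.coeff_C]
  congr 1
  exact Finset.sum_congr rfl fun j _ => by rw [PowerSeries.coeff_C_mul, geo, PowerSeries.coeff_mk]

section PSIdentities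

/-- `(q⁻¹ − q a_j u) φ⁺_{A∖j}(u) = (q − q⁻¹ a_j u) φ⁺_A(u)` for `j ∈ A`. -/
lemma PS1 {A : Finset (Fin n)} {j : Fin n} (hj : j ∈ A) :
    (PowerSeries.C q⁻¹ - PowerSeries.C (q * a j) * PowerSeries.X) * gp n q a (A.erase j)
      = (PowerSeries.C q - PowerSeries.C (q⁻¹ * a j) * PowerSeries.X) * gp n q a A := by
  rw [gp, gp, compl_erase,
    Finset.prod_insert (by simp [hj] : j ∉ Aᶜ), ← Finset.mul_prod_erase A _ hj]
  ring

/-- `(q − q⁻¹ a_j u) φ⁺_{A∪j}(u) = (q⁻¹ − q a_j u) φ⁺_A(u)` for `j ∉ A`. -/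
lemma PS2 {A : Finset (Fin n)} {j : Fin n} (hj : j ∉ A) :
    (PowerSeries.C q - PowerSeries.C (q⁻¹ * a j) * PowerSeries.X) * gp n q a (insert j A)
      = (PowerSeries.C q⁻¹ - PowerSeries.C (q * a j) * PowerSeries.X) * gp n q a A := by
  rw [gp, gp, compl_insert, Finset.prod_insert hj,
    ← Finset.mul_prod_erase Aᶜ _ (mem_compl.mpr hj)]
  ring

/-- same for `φ⁻` in the variable `w = u⁻¹` -/
lemma PS1' (ha0 : ∀ i, a i ≠ 0) {A : Finset (Fin n)} {j : Fin n} (hj : j ∈ A) :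
    (PowerSeries.C q⁻¹ * PowerSeries.X - PowerSeries.C (q * a j)) * gm n q a (A.erase j)
      = (PowerSeries.C q * PowerSeries.X - PowerSeries.C (q⁻¹ * a j)) * gm n q a A := by
  have hC : PowerSeries.C (a j) * PowerSeries.C ((a j)⁻¹) = 1 := by
    rw [← _root_.map_mul, mul_inv_cancel₀ (ha0 j), _root_.map_one]
  rw [gm, gm, compl_erase,
    Finset.prod_insert (by simp [hj] : j ∉ Aᶜ), ← Finset.mul_prod_erase A _ hj]
  simp only [_root_.map_mul]
  linear_combination ((PowerSeries.C q * PowerSeries.C q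
      - PowerSeries.C q⁻¹ * PowerSeries.C q⁻¹) * PowerSeries.X
      * (∏ x ∈ A.erase j, (PowerSeries.C q - PowerSeries.C q⁻¹ * PowerSeries.C (a x)⁻¹ * PowerSeries.X))
      * (∏ x ∈ Aᶜ, (PowerSeries.C q⁻¹ - PowerSeries.C q * PowerSeries.C (a x)⁻¹ * PowerSeries.X))
      * (∏ j : Fin n, (1 - PowerSeries.C (a j)⁻¹ * PowerSeries.X))⁻¹) * hC

lemma PS2' (ha0 : ∀ i, a i ≠ 0) {A : Finset (Fin n)} {j : Fin n} (hj : j ∉ A) :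
    (PowerSeries.C q * PowerSeries.X - PowerSeries.C (q⁻¹ * a j)) * gm n q a (insert j A)
      = (PowerSeries.C q⁻¹ * PowerSeries.X - PowerSeries.C (q * a j)) * gm n q a A := by
  have hC : PowerSeries.C (a j) * PowerSeries.C ((a j)⁻¹) = 1 := by
    rw [← _root_.map_mul, mul_inv_cancel₀ (ha0 j), _root_.map_one]
  rw [gm, gm, compl_insert, Finset.prod_insert hj,
    ← Finset.mul_prod_erase Aᶜ _ (mem_compl.mpr hj)]
  simp only [_root_.map_mul]
  linear_combination ((PowerSeries.C q⁻¹ * PowerSeries.C q⁻¹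
      - PowerSeries.C q * PowerSeries.C q) * PowerSeries.X
      * (∏ x ∈ A, (PowerSeries.C q - PowerSeries.C q⁻¹ * PowerSeries.C (a x)⁻¹ * PowerSeries.X))
      * (∏ x ∈ Aᶜ.erase j, (PowerSeries.C q⁻¹ - PowerSeries.C q * PowerSeries.C (a x)⁻¹ * PowerSeries.X))
      * (∏ j : Fin n, (1 - PowerSeries.C (a j)⁻¹ * PowerSeries.X))⁻¹) * hC

end PSIdentities

section CoeffExtraction

lemma coeff_linA (α β : ℂ) (f : PowerSeries ℂ) (m : ℕ) :
    PowerSeries.coeff (m+1) ((PowerSeries.C α - PowerSeries.C β * PowerSeries.X) * f)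
      = α * PowerSeries.coeff (m+1) f - β * PowerSeries.coeff m f := by
  rw [sub_mul, map_sub, PowerSeries.coeff_C_mul, mul_assoc, PowerSeries.coeff_C_mul,
    PowerSeries.coeff_succ_X_mul]

lemma coeff_linA0 (α β : ℂ) (f : PowerSeries ℂ) :
    PowerSeries.coeff 0 ((PowerSeries.C α - PowerSeries.C β * PowerSeries.X) * f)
      = α * PowerSeries.coeff 0 f := by
  rw [sub_mul, map_sub, PowerSeries.coeff_C_mul, mul_assoc, PowerSeries.coeff_C_mul]
  simp

lemma coeff_linB (α β : ℂ) (f : PowerSeries ℂ) (m : ℕ) :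
    PowerSeries.coeff (m+1) ((PowerSeries.C α * PowerSeries.X - PowerSeries.C β) * f)
      = α * PowerSeries.coeff m f - β * PowerSeries.coeff (m+1) f := by
  rw [sub_mul, map_sub, mul_assoc, PowerSeries.coeff_C_mul, PowerSeries.coeff_succ_X_mul,
    PowerSeries.coeff_C_mul]

lemma coeff_linB0 (α β : ℂ) (f : PowerSeries ℂ) :
    PowerSeries.coeff 0 ((PowerSeries.C α * PowerSeries.X - PowerSeries.C β) * f)
      = -(β * PowerSeries.coeff 0 f) := by
  rw [sub_mul, map_sub, mul_assoc, PowerSeries.coeff_C_mul, PowerSeries.coeff_C_mul]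
  simp

end CoeffExtraction

section KeyScalars

/-- key scalar identity for the `φ⁺`–`x⁺` relation -/
lemma K1 (hq : q ≠ 0) (ha0 : ∀ i, a i ≠ 0) {A : Finset (Fin n)} {j : Fin n} (hj : j ∈ A)
    (m : ℤ) :
    q⁻¹ * (if 0 ≤ m then PowerSeries.coeff m.toNat (gp n q a (A.erase j)) else 0)
      - q * a j * (if 0 ≤ m - 1 then PowerSeries.coeff (m-1).toNat (gp n q a (A.erase j)) else 0)
    = q * (if 0 ≤ m then PowerSeries.coeff m.toNat (gp n q a A) else 0)
      - q⁻¹ * a j * (if 0 ≤ m - 1 then PowerSeries.coeff (m-1).toNat (gp n q a A) else 0) := by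
  rcases lt_trichotomy m 0 with h | h | h
  · rw [if_neg (by omega), if_neg (by omega), if_neg (by omega), if_neg (by omega)]
    ring
  · subst h
    rw [if_pos le_rfl, if_pos le_rfl, if_neg (by omega), if_neg (by omega)]
    have := congrArg (PowerSeries.coeff 0) (PS1 (q := q) (a := a) hj)
    rw [coeff_linA0, coeff_linA0] at this
    simpa using this
  · have h1 : (0:ℤ) ≤ m := le_of_lt h
    have h2 : (0:ℤ) ≤ m - 1 := by omega
    rw [if_pos h1, if_pos h1, if_pos h2, if_pos h2]
    have hmt : m.toNat = (m-1).toNat + 1 := by omega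
    have := congrArg (PowerSeries.coeff ((m-1).toNat + 1)) (PS1 (q := q) (a := a) hj)
    rw [coeff_linA, coeff_linA] at this
    rw [hmt]
    linear_combination this

/-- key scalar identity for the `φ⁺`–`x⁻` relation -/
lemma K3 (hq : q ≠ 0) (ha0 : ∀ i, a i ≠ 0) {A : Finset (Fin n)} {j : Fin n} (hj : j ∉ A)
    (m : ℤ) :
    q * (if 0 ≤ m then PowerSeries.coeff m.toNat (gp n q a (insert j A)) else 0)
      - q⁻¹ * a j * (if 0 ≤ m - 1 then PowerSeries.coeff (m-1).toNat (gp n q a (insert j A)) else 0)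
    = q⁻¹ * (if 0 ≤ m then PowerSeries.coeff m.toNat (gp n q a A) else 0)
      - q * a j * (if 0 ≤ m - 1 then PowerSeries.coeff (m-1).toNat (gp n q a A) else 0) := by
  rcases lt_trichotomy m 0 with h | h | h
  · rw [if_neg (by omega), if_neg (by omega), if_neg (by omega), if_neg (by omega)]
    ring
  · subst h
    rw [if_pos le_rfl, if_pos le_rfl, if_neg (by omega), if_neg (by omega)]
    have := congrArg (PowerSeries.coeff 0) (PS2 (q := q) (a := a) hj)
    rw [coeff_linA0, coeff_linA0] at this
    simpa using this
  · have h1 : (0:ℤ) ≤ m := le_of_lt h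
    have h2 : (0:ℤ) ≤ m - 1 := by omega
    rw [if_pos h1, if_pos h1, if_pos h2, if_pos h2]
    have hmt : m.toNat = (m-1).toNat + 1 := by omega
    have := congrArg (PowerSeries.coeff ((m-1).toNat + 1)) (PS2 (q := q) (a := a) hj)
    rw [coeff_linA, coeff_linA] at this
    rw [hmt]
    linear_combination this

/-- key scalar identity for the `φ⁻`–`x⁺` relation -/
lemma K2 (hq : q ≠ 0) (ha0 : ∀ i, a i ≠ 0) {A : Finset (Fin n)} {j : Fin n} (hj : j ∈ A)
    (m : ℤ) :
    q⁻¹ * (if m ≤ 0 then PowerSeries.coeff (-m).toNat (gm n q a (A.erase j)) else 0)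
      - q * a j * (if m - 1 ≤ 0 then PowerSeries.coeff (-(m-1)).toNat (gm n q a (A.erase j)) else 0)
    = q * (if m ≤ 0 then PowerSeries.coeff (-m).toNat (gm n q a A) else 0)
      - q⁻¹ * a j * (if m - 1 ≤ 0 then PowerSeries.coeff (-(m-1)).toNat (gm n q a A) else 0) := by
  rcases lt_trichotomy m 1 with h | h | h
  · -- m ≤ 0 : both conditions true
    have h1 : m ≤ 0 := by omega
    have h2 : m - 1 ≤ 0 := by omega
    rw [if_pos h1, if_pos h1, if_pos h2, if_pos h2]
    have hmt : (-(m-1)).toNat = (-m).toNat + 1 := by omega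
    have := congrArg (PowerSeries.coeff ((-m).toNat + 1)) (PS1' (q := q) ha0 hj)
    rw [coeff_linB, coeff_linB] at this
    rw [hmt]
    linear_combination this
  · subst h
    rw [if_neg (show ¬((1:ℤ) ≤ 0) by omega), if_neg (show ¬((1:ℤ) ≤ 0) by omega),
      if_pos (show (1:ℤ) - 1 ≤ 0 by omega), if_pos (show (1:ℤ) - 1 ≤ 0 by omega)]
    have := congrArg (PowerSeries.coeff 0) (PS1' (q := q) ha0 hj)
    rw [coeff_linB0, coeff_linB0] at this
    have h0 : (-(1-1:ℤ)).toNat = 0 := by omega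
    rw [h0]
    linear_combination this
  · rw [if_neg (by omega), if_neg (by omega), if_neg (by omega), if_neg (by omega)]
    ring

/-- key scalar identity for the `φ⁻`–`x⁻` relation -/
lemma K4 (hq : q ≠ 0) (ha0 : ∀ i, a i ≠ 0) {A : Finset (Fin n)} {j : Fin n} (hj : j ∉ A)
    (m : ℤ) :
    q * (if m ≤ 0 then PowerSeries.coeff (-m).toNat (gm n q a (insert j A)) else 0)
      - q⁻¹ * a j * (if m - 1 ≤ 0 then PowerSeries.coeff (-(m-1)).toNat (gm n q a (insert j A)) else 0)
    = q⁻¹ * (if m ≤ 0 then PowerSeries.coeff (-m).toNat (gm n q a A) else 0)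
      - q * a j * (if m - 1 ≤ 0 then PowerSeries.coeff (-(m-1)).toNat (gm n q a A) else 0) := by
  rcases lt_trichotomy m 1 with h | h | h
  · have h1 : m ≤ 0 := by omega
    have h2 : m - 1 ≤ 0 := by omega
    rw [if_pos h1, if_pos h1, if_pos h2, if_pos h2]
    have hmt : (-(m-1)).toNat = (-m).toNat + 1 := by omega
    have := congrArg (PowerSeries.coeff ((-m).toNat + 1)) (PS2' (q := q) ha0 hj)
    rw [coeff_linB, coeff_linB] at this
    rw [hmt]
    linear_combination this
  · subst h
    rw [if_neg (show ¬((1:ℤ) ≤ 0) by omega), if_neg (show ¬((1:ℤ) ≤ 0) by omega),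
      if_pos (show (1:ℤ) - 1 ≤ 0 by omega), if_pos (show (1:ℤ) - 1 ≤ 0 by omega)]
    have := congrArg (PowerSeries.coeff 0) (PS2' (q := q) ha0 hj)
    rw [coeff_linB0, coeff_linB0] at this
    have h0 : (-(1-1:ℤ)).toNat = 0 := by omega
    rw [h0]
    linear_combination this
  · rw [if_neg (by omega), if_neg (by omega), if_neg (by omega), if_neg (by omega)]
    ring

end KeyScalars

/-- the partial-fraction / delta-function identity giving `[x⁺,x⁻]` -/
lemma KeyPF (hq : q ≠ 0) (ha0 : ∀ i, a i ≠ 0) (ha : Function.Injective a)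
    (A : Finset (Fin n)) (m : ℤ) :
    (q - q⁻¹) * ((∑ j ∈ Aᶜ, a j ^ m * (cpc q a (insert j A) j * cmc q a A j))
      - ∑ j ∈ A, a j ^ m * (cmc q a (A.erase j) j * cpc q a A j))
    = (if 0 ≤ m then PowerSeries.coeff m.toNat (gp n q a A) else 0)
      - (if m ≤ 0 then PowerSeries.coeff (-m).toNat (gm n q a A) else 0) := by
  have hL : (q - q⁻¹) * ((∑ j ∈ Aᶜ, a j ^ m * (cpc q a (insert j A) j * cmc q a A j))
      - ∑ j ∈ A, a j ^ m * (cmc q a (A.erase j) j * cpc q a A j))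
      = ∑ j : Fin n, RR q a A j * a j ^ m := by
    rw [← Finset.sum_add_sum_compl A (fun j => RR q a A j * a j ^ m)]
    have e1 : ∑ j ∈ A, RR q a A j * a j ^ m
        = ∑ j ∈ A, -((q - q⁻¹) * (a j ^ m * (cmc q a (A.erase j) j * cpc q a A j))) :=
      Finset.sum_congr rfl fun j hj => by rw [RR, if_pos hj]; ring
    have e2 : ∑ j ∈ Aᶜ, RR q a A j * a j ^ m
        = ∑ j ∈ Aᶜ, (q - q⁻¹) * (a j ^ m * (cpc q a (insert j A) j * cmc q a A j)) :=
      Finset.sum_congr rfl fun j hj => by rw [RR, if_neg (mem_compl.mp hj)]; ring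
    rw [e1, e2, Finset.sum_neg_distrib, ← Finset.mul_sum, ← Finset.mul_sum]
    ring
  rw [hL]
  rcases lt_trichotomy m 0 with h | h | h
  · rw [if_neg (by omega), if_pos (by omega), coeffB hq ha0 ha, zero_sub]
    have hk : (-m).toNat ≠ 0 := by omega
    rw [if_neg hk, zero_sub, neg_neg]
    refine Finset.sum_congr rfl fun j _ => ?_
    have hz : a j ^ m = ((a j)⁻¹) ^ ((-m).toNat) := by
      rw [inv_pow, ← zpow_natCast, ← _root_.zpow_neg]
      congr 1
      omega
    rw [hz]
  · subst h
    rw [if_pos le_rfl, if_pos le_rfl, coeffA hq ha0 ha, coeffB hq ha0 ha]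
    norm_num
  · rw [if_pos (by omega), if_neg (by omega), coeffA hq ha0 ha, sub_zero]
    have hk : m.toNat ≠ 0 := by omega
    rw [if_neg hk, zero_add]
    refine Finset.sum_congr rfl fun j _ => ?_
    have hz : a j ^ m = a j ^ m.toNat := by
      rw [← zpow_natCast]
      congr 1
      omega
    rw [hz]

section MatrixHelpers

lemma Xp_apply (t : ℤ) (B A : Finset (Fin n)) :
    Xp n q a t B A = ∑ j ∈ A, if B = A.erase j then a j ^ t * cpc q a A j else 0 := rfl

lemma Xm_apply (t : ℤ) (B A : Finset (Fin n)) :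
    Xm n q a t B A = ∑ j ∈ Aᶜ, if B = insert j A then a j ^ t * cmc q a A j else 0 := rfl

lemma Php_mul (m : ℤ) (M : Matrix (Finset (Fin n)) (Finset (Fin n)) ℂ)
    (B A : Finset (Fin n)) :
    (Php n q a m * M) B A
      = (if 0 ≤ m then PowerSeries.coeff m.toNat (gp n q a B) else 0) * M B A := by
  rw [Matrix.mul_apply, Finset.sum_eq_single B
    (fun C _ hCB => by rw [Php]; rw [if_neg (fun hc => hCB hc.1.symm), zero_mul])
    (fun hB => absurd (mem_univ B) hB)]
  rw [Php]
  by_cases h : (0:ℤ) ≤ m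
  · rw [if_pos ⟨rfl, h⟩, if_pos h]
  · rw [if_neg (fun hc => h hc.2), if_neg h]

lemma mul_Php (m : ℤ) (M : Matrix (Finset (Fin n)) (Finset (Fin n)) ℂ)
    (B A : Finset (Fin n)) :
    (M * Php n q a m) B A
      = M B A * (if 0 ≤ m then PowerSeries.coeff m.toNat (gp n q a A) else 0) := by
  rw [Matrix.mul_apply, Finset.sum_eq_single A
    (fun C _ hCA => by rw [Php]; rw [if_neg (fun hc => hCA hc.1), mul_zero])
    (fun hA => absurd (mem_univ A) hA)]
  rw [Php]
  by_cases h : (0:ℤ) ≤ m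
  · rw [if_pos ⟨rfl, h⟩, if_pos h]
  · rw [if_neg (fun hc => h hc.2), if_neg h]

lemma Phm_mul (m : ℤ) (M : Matrix (Finset (Fin n)) (Finset (Fin n)) ℂ)
    (B A : Finset (Fin n)) :
    (Phm n q a m * M) B A
      = (if m ≤ 0 then PowerSeries.coeff (-m).toNat (gm n q a B) else 0) * M B A := by
  rw [Matrix.mul_apply, Finset.sum_eq_single B
    (fun C _ hCB => by rw [Phm]; rw [if_neg (fun hc => hCB hc.1.symm), zero_mul])
    (fun hB => absurd (mem_univ B) hB)]
  rw [Phm]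
  by_cases h : m ≤ 0
  · rw [if_pos ⟨rfl, h⟩, if_pos h]
  · rw [if_neg (fun hc => h hc.2), if_neg h]

lemma mul_Phm (m : ℤ) (M : Matrix (Finset (Fin n)) (Finset (Fin n)) ℂ)
    (B A : Finset (Fin n)) :
    (M * Phm n q a m) B A
      = M B A * (if m ≤ 0 then PowerSeries.coeff (-m).toNat (gm n q a A) else 0) := by
  rw [Matrix.mul_apply, Finset.sum_eq_single A
    (fun C _ hCA => by rw [Phm]; rw [if_neg (fun hc => hCA hc.1), mul_zero])
    (fun hA => absurd (mem_univ A) hA)]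
  rw [Phm]
  by_cases h : m ≤ 0
  · rw [if_pos ⟨rfl, h⟩, if_pos h]
  · rw [if_neg (fun hc => h hc.2), if_neg h]

end MatrixHelpers

section Relations

lemma rel1a (m k : ℤ) : Php n q a m * Php n q a k = Php n q a k * Php n q a m := by
  ext B A
  rw [Php_mul, Php_mul, Php, Php]
  by_cases hBA : B = A
  · subst hBA; simp only [true_and]; ring
  · rw [if_neg (show ¬(B = A ∧ 0 ≤ k) from fun hc => hBA hc.1),
      if_neg (show ¬(B = A ∧ 0 ≤ m) from fun hc => hBA hc.1), mul_zero, mul_zero]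

lemma rel1b (m k : ℤ) : Php n q a m * Phm n q a k = Phm n q a k * Php n q a m := by
  ext B A
  rw [Php_mul, Phm_mul, Phm, Php]
  by_cases hBA : B = A
  · subst hBA; simp only [true_and]; ring
  · rw [if_neg (show ¬(B = A ∧ k ≤ 0) from fun hc => hBA hc.1),
      if_neg (show ¬(B = A ∧ 0 ≤ m) from fun hc => hBA hc.1), mul_zero, mul_zero]

lemma rel1c (m k : ℤ) : Phm n q a m * Phm n q a k = Phm n q a k * Phm n q a m := by
  ext B A
  rw [Phm_mul, Phm_mul, Phm, Phm]
  by_cases hBA : B = A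
  · subst hBA; simp only [true_and]; ring
  · rw [if_neg (show ¬(B = A ∧ k ≤ 0) from fun hc => hBA hc.1),
      if_neg (show ¬(B = A ∧ m ≤ 0) from fun hc => hBA hc.1), mul_zero, mul_zero]

lemma rel2 (hq : q ≠ 0) (ha0 : ∀ i, a i ≠ 0) (m t : ℤ) :
    q⁻¹ • (Php n q a m * Xp n q a t) - q • (Php n q a (m - 1) * Xp n q a (t + 1))
      = q • (Xp n q a t * Php n q a m) - q⁻¹ • (Xp n q a (t + 1) * Php n q a (m - 1)) := by
  ext B A
  simp only [Matrix.sub_apply, Matrix.smul_apply, smul_eq_mul, Php_mul, mul_Php, Xp_apply]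
  simp only [Finset.mul_sum, Finset.sum_mul]
  rw [← Finset.sum_sub_distrib, ← Finset.sum_sub_distrib]
  refine Finset.sum_congr rfl fun j hj => ?_
  by_cases hB : B = A.erase j
  · subst hB
    rw [zpow_add_one₀ (ha0 j), if_pos rfl, if_pos rfl]
    linear_combination (a j ^ t * cpc q a A j) * K1 hq ha0 hj m
  · rw [if_neg hB, if_neg hB]
    ring

lemma rel3 (hq : q ≠ 0) (ha0 : ∀ i, a i ≠ 0) (m t : ℤ) :
    q⁻¹ • (Phm n q a m * Xp n q a t) - q • (Phm n q a (m - 1) * Xp n q a (t + 1))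
      = q • (Xp n q a t * Phm n q a m) - q⁻¹ • (Xp n q a (t + 1) * Phm n q a (m - 1)) := by
  ext B A
  simp only [Matrix.sub_apply, Matrix.smul_apply, smul_eq_mul, Phm_mul, mul_Phm, Xp_apply]
  simp only [Finset.mul_sum, Finset.sum_mul]
  rw [← Finset.sum_sub_distrib, ← Finset.sum_sub_distrib]
  refine Finset.sum_congr rfl fun j hj => ?_
  by_cases hB : B = A.erase j
  · subst hB
    rw [zpow_add_one₀ (ha0 j), if_pos rfl, if_pos rfl]
    linear_combination (a j ^ t * cpc q a A j) * K2 hq ha0 hj m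
  · rw [if_neg hB, if_neg hB]
    ring

lemma rel4 (hq : q ≠ 0) (ha0 : ∀ i, a i ≠ 0) (m t : ℤ) :
    q • (Php n q a m * Xm n q a t) - q⁻¹ • (Php n q a (m - 1) * Xm n q a (t + 1))
      = q⁻¹ • (Xm n q a t * Php n q a m) - q • (Xm n q a (t + 1) * Php n q a (m - 1)) := by
  ext B A
  simp only [Matrix.sub_apply, Matrix.smul_apply, smul_eq_mul, Php_mul, mul_Php, Xm_apply]
  simp only [Finset.mul_sum, Finset.sum_mul]
  rw [← Finset.sum_sub_distrib, ← Finset.sum_sub_distrib]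
  refine Finset.sum_congr rfl fun j hj => ?_
  by_cases hB : B = insert j A
  · subst hB
    rw [zpow_add_one₀ (ha0 j), if_pos rfl, if_pos rfl]
    linear_combination (a j ^ t * cmc q a A j) * K3 hq ha0 (mem_compl.mp hj) m
  · rw [if_neg hB, if_neg hB]
    ring

lemma rel5 (hq : q ≠ 0) (ha0 : ∀ i, a i ≠ 0) (m t : ℤ) :
    q • (Phm n q a m * Xm n q a t) - q⁻¹ • (Phm n q a (m - 1) * Xm n q a (t + 1))
      = q⁻¹ • (Xm n q a t * Phm n q a m) - q • (Xm n q a (t + 1) * Phm n q a (m - 1)) := by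
  ext B A
  simp only [Matrix.sub_apply, Matrix.smul_apply, smul_eq_mul, Phm_mul, mul_Phm, Xm_apply]
  simp only [Finset.mul_sum, Finset.sum_mul]
  rw [← Finset.sum_sub_distrib, ← Finset.sum_sub_distrib]
  refine Finset.sum_congr rfl fun j hj => ?_
  by_cases hB : B = insert j A
  · subst hB
    rw [zpow_add_one₀ (ha0 j), if_pos rfl, if_pos rfl]
    linear_combination (a j ^ t * cmc q a A j) * K4 hq ha0 (mem_compl.mp hj) m
  · rw [if_neg hB, if_neg hB]
    ring

end Relations

section ProductExpansions

lemma XpXp_apply (r t : ℤ) (B A : Finset (Fin n)) :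
    (Xp n q a r * Xp n q a t) B A
      = ∑ j ∈ A, ∑ i ∈ A.erase j, if B = (A.erase j).erase i then
          (a i ^ r * cpc q a (A.erase j) i) * (a j ^ t * cpc q a A j) else 0 := by
  rw [Matrix.mul_apply]
  have h1 : ∀ C, Xp n q a r B C * Xp n q a t C A
      = ∑ j ∈ A, (if C = A.erase j then Xp n q a r B C * (a j ^ t * cpc q a A j) else 0) := by
    intro C
    rw [Xp_apply t C A, Finset.mul_sum]
    exact Finset.sum_congr rfl fun j _ => by rw [mul_ite, mul_zero]
  rw [Finset.sum_congr rfl (fun C _ => h1 C), Finset.sum_comm]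
  refine Finset.sum_congr rfl fun j hj => ?_
  rw [Finset.sum_ite_eq' univ (A.erase j)
    (fun C => Xp n q a r B C * (a j ^ t * cpc q a A j)), if_pos (mem_univ _), Xp_apply,
    Finset.sum_mul]
  exact Finset.sum_congr rfl fun i _ => by rw [ite_mul, zero_mul]

lemma XmXm_apply (r t : ℤ) (B A : Finset (Fin n)) :
    (Xm n q a r * Xm n q a t) B A
      = ∑ j ∈ Aᶜ, ∑ i ∈ (insert j A)ᶜ, if B = insert i (insert j A) then
          (a i ^ r * cmc q a (insert j A) i) * (a j ^ t * cmc q a A j) else 0 := by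
  rw [Matrix.mul_apply]
  have h1 : ∀ C, Xm n q a r B C * Xm n q a t C A
      = ∑ j ∈ Aᶜ, (if C = insert j A then Xm n q a r B C * (a j ^ t * cmc q a A j) else 0) := by
    intro C
    rw [Xm_apply t C A, Finset.mul_sum]
    exact Finset.sum_congr rfl fun j _ => by rw [mul_ite, mul_zero]
  rw [Finset.sum_congr rfl (fun C _ => h1 C), Finset.sum_comm]
  refine Finset.sum_congr rfl fun j hj => ?_
  rw [Finset.sum_ite_eq' univ (insert j A)
    (fun C => Xm n q a r B C * (a j ^ t * cmc q a A j)), if_pos (mem_univ _), Xm_apply,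
    Finset.sum_mul]
  exact Finset.sum_congr rfl fun i _ => by rw [ite_mul, zero_mul]

lemma XpXm_apply (r t : ℤ) (B A : Finset (Fin n)) :
    (Xp n q a r * Xm n q a t) B A
      = ∑ j ∈ Aᶜ, ∑ i ∈ insert j A, if B = (insert j A).erase i then
          (a i ^ r * cpc q a (insert j A) i) * (a j ^ t * cmc q a A j) else 0 := by
  rw [Matrix.mul_apply]
  have h1 : ∀ C, Xp n q a r B C * Xm n q a t C A
      = ∑ j ∈ Aᶜ, (if C = insert j A then Xp n q a r B C * (a j ^ t * cmc q a A j) else 0) := by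
    intro C
    rw [Xm_apply t C A, Finset.mul_sum]
    exact Finset.sum_congr rfl fun j _ => by rw [mul_ite, mul_zero]
  rw [Finset.sum_congr rfl (fun C _ => h1 C), Finset.sum_comm]
  refine Finset.sum_congr rfl fun j hj => ?_
  rw [Finset.sum_ite_eq' univ (insert j A)
    (fun C => Xp n q a r B C * (a j ^ t * cmc q a A j)), if_pos (mem_univ _), Xp_apply,
    Finset.sum_mul]
  exact Finset.sum_congr rfl fun i _ => by rw [ite_mul, zero_mul]

lemma XmXp_apply (r t : ℤ) (B A : Finset (Fin n)) :
    (Xm n q a r * Xp n q a t) B A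
      = ∑ j ∈ A, ∑ i ∈ (A.erase j)ᶜ, if B = insert i (A.erase j) then
          (a i ^ r * cmc q a (A.erase j) i) * (a j ^ t * cpc q a A j) else 0 := by
  rw [Matrix.mul_apply]
  have h1 : ∀ C, Xm n q a r B C * Xp n q a t C A
      = ∑ j ∈ A, (if C = A.erase j then Xm n q a r B C * (a j ^ t * cpc q a A j) else 0) := by
    intro C
    rw [Xp_apply t C A, Finset.mul_sum]
    exact Finset.sum_congr rfl fun j _ => by rw [mul_ite, mul_zero]
  rw [Finset.sum_congr rfl (fun C _ => h1 C), Finset.sum_comm]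
  refine Finset.sum_congr rfl fun j hj => ?_
  rw [Finset.sum_ite_eq' univ (A.erase j)
    (fun C => Xm n q a r B C * (a j ^ t * cpc q a A j)), if_pos (mem_univ _), Xm_apply,
    Finset.sum_mul]
  exact Finset.sum_congr rfl fun i _ => by rw [ite_mul, zero_mul]

end ProductExpansions

section FactorLemmas

lemma cpc_erase {A : Finset (Fin n)} {j : Fin n} (hj : j ∈ A) (i : Fin n) :
    cpc q a (A.erase j) i = ((a i * q - a j * q⁻¹) / (a i - a j)) * cpc q a A i := by
  rw [cpc, cpc, compl_erase, Finset.prod_insert (by simp [hj])]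

lemma cpc_insert {A : Finset (Fin n)} {j : Fin n} (hj : j ∉ A) (i : Fin n) :
    cpc q a A i = ((a i * q - a j * q⁻¹) / (a i - a j)) * cpc q a (insert j A) i := by
  rw [cpc, cpc, compl_insert, ← Finset.mul_prod_erase Aᶜ _ (mem_compl.mpr hj)]

lemma cmc_insert {A : Finset (Fin n)} {j : Fin n} (hj : j ∉ A) (i : Fin n) :
    cmc q a (insert j A) i = ((a j * q - a i * q⁻¹) / (a j - a i)) * cmc q a A i := by
  rw [cmc, cmc, Finset.prod_insert hj]

lemma cmc_erase {A : Finset (Fin n)} {j : Fin n} (hj : j ∈ A) (i : Fin n) :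
    cmc q a A i = ((a j * q - a i * q⁻¹) / (a j - a i)) * cmc q a (A.erase j) i := by
  rw [cmc, cmc, ← Finset.mul_prod_erase A _ hj]

end FactorLemmas

set_option maxHeartbeats 1600000 in
lemma rel7 (hq : q ≠ 0) (ha0 : ∀ i, a i ≠ 0) (ha : Function.Injective a) (r s : ℤ) :
    Xp n q a (r + 1) * Xp n q a s - (q ^ 2) • (Xp n q a r * Xp n q a (s + 1))
      = (q ^ 2) • (Xp n q a s * Xp n q a (r + 1)) - Xp n q a (s + 1) * Xp n q a r := by
  ext B A
  rw [← sub_eq_zero]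
  simp only [Matrix.sub_apply, Matrix.smul_apply, smul_eq_mul, XpXp_apply]
  simp only [Finset.mul_sum]
  simp only [← Finset.sum_sub_distrib]
  rw [Finset.sum_sigma' A (fun j => A.erase j)]
  refine Finset.sum_involution (fun p _ => ⟨p.2, p.1⟩) ?_ ?_ ?_ ?_
  · rintro ⟨j, i⟩ hp
    rw [Finset.mem_sigma] at hp
    obtain ⟨hjA, hiA⟩ := hp
    have hij : i ≠ j := (mem_erase.mp hiA).1
    have hiA' : i ∈ A := (mem_erase.mp hiA).2
    have hd : a i - a j ≠ 0 := sub_ne_zero_of_ne fun h => hij (ha h)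
    have hd' : a j - a i ≠ 0 := sub_ne_zero_of_ne fun h => hij (ha h.symm)
    simp only
    rw [Finset.erase_right_comm (a := j) (b := i)]
    by_cases hB : B = (A.erase i).erase j
    · simp only [if_pos hB]
      rw [cpc_erase hjA i, cpc_erase hiA' j, zpow_add_one₀ (ha0 i) r, zpow_add_one₀ (ha0 i) s,
        zpow_add_one₀ (ha0 j) r, zpow_add_one₀ (ha0 j) s]
      field_simp
      ring
    · simp only [if_neg hB]
      ring
  · rintro ⟨j, i⟩ hp _
    rw [Finset.mem_sigma] at hp
    intro hcontra
    have : i = j := congrArg Sigma.fst hcontra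
    exact (mem_erase.mp hp.2).1 this
  · rintro ⟨j, i⟩ hp
    rw [Finset.mem_sigma] at hp ⊢
    exact ⟨(mem_erase.mp hp.2).2,
      mem_erase.mpr ⟨fun h => (mem_erase.mp hp.2).1 h.symm, hp.1⟩⟩
  · rintro ⟨j, i⟩ _
    rfl

set_option maxHeartbeats 1600000 in
lemma rel8 (hq : q ≠ 0) (ha0 : ∀ i, a i ≠ 0) (ha : Function.Injective a) (r s : ℤ) :
    Xm n q a (r + 1) * Xm n q a s - (q⁻¹ ^ 2) • (Xm n q a r * Xm n q a (s + 1))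
      = (q⁻¹ ^ 2) • (Xm n q a s * Xm n q a (r + 1)) - Xm n q a (s + 1) * Xm n q a r := by
  ext B A
  rw [← sub_eq_zero]
  simp only [Matrix.sub_apply, Matrix.smul_apply, smul_eq_mul, XmXm_apply]
  simp only [compl_insert]
  simp only [Finset.mul_sum]
  simp only [← Finset.sum_sub_distrib]
  rw [Finset.sum_sigma' Aᶜ (fun j => Aᶜ.erase j)]
  refine Finset.sum_involution (fun p _ => ⟨p.2, p.1⟩) ?_ ?_ ?_ ?_
  · rintro ⟨j, i⟩ hp
    rw [Finset.mem_sigma] at hp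
    obtain ⟨hjA, hiA⟩ := hp
    have hij : i ≠ j := (mem_erase.mp hiA).1
    have hiA' : i ∈ Aᶜ := (mem_erase.mp hiA).2
    have hjA' : j ∉ A := mem_compl.mp hjA
    have hiA'' : i ∉ A := mem_compl.mp hiA'
    have hd : a i - a j ≠ 0 := sub_ne_zero_of_ne fun h => hij (ha h)
    have hd' : a j - a i ≠ 0 := sub_ne_zero_of_ne fun h => hij (ha h.symm)
    simp only
    rw [Finset.insert_comm (a := j) (b := i)]
    by_cases hB : B = insert i (insert j A)
    · simp only [if_pos hB]
      rw [cmc_insert hjA' i, cmc_insert hiA'' j, zpow_add_one₀ (ha0 i) r, zpow_add_one₀ (ha0 i) s,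
        zpow_add_one₀ (ha0 j) r, zpow_add_one₀ (ha0 j) s, inv_pow]
      field_simp
      ring
    · simp only [if_neg hB]
      ring
  · rintro ⟨j, i⟩ hp _
    rw [Finset.mem_sigma] at hp
    intro hcontra
    have : i = j := congrArg Sigma.fst hcontra
    exact (mem_erase.mp hp.2).1 this
  · rintro ⟨j, i⟩ hp
    rw [Finset.mem_sigma] at hp ⊢
    exact ⟨(mem_erase.mp hp.2).2,
      mem_erase.mpr ⟨fun h => (mem_erase.mp hp.2).1 h.symm, hp.1⟩⟩
  · rintro ⟨j, i⟩ _
    rfl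

lemma rel6 (hq : q ≠ 0) (hq2 : q - q⁻¹ ≠ 0) (ha0 : ∀ i, a i ≠ 0)
    (ha : Function.Injective a) (r s : ℤ) :
    Xp n q a r * Xm n q a s - Xm n q a s * Xp n q a r
      = (q - q⁻¹)⁻¹ • (Php n q a (r + s) - Phm n q a (r + s)) := by
  ext B A
  rw [Matrix.sub_apply, Matrix.smul_apply, Matrix.sub_apply, smul_eq_mul,
    XpXm_apply, XmXp_apply, Php, Phm]
  have h1 : ∀ j ∈ Aᶜ, (∑ i ∈ insert j A, if B = (insert j A).erase i then
        (a i ^ r * cpc q a (insert j A) i) * (a j ^ s * cmc q a A j) else 0)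
      = (if B = A then (a j ^ r * cpc q a (insert j A) j) * (a j ^ s * cmc q a A j) else 0)
        + ∑ i ∈ A, if B = (insert j A).erase i then
            (a i ^ r * cpc q a (insert j A) i) * (a j ^ s * cmc q a A j) else 0 := by
    intro j hj
    rw [Finset.sum_insert (mem_compl.mp hj), Finset.erase_insert (mem_compl.mp hj)]
  have h2 : ∀ j ∈ A, (∑ i ∈ (A.erase j)ᶜ, if B = insert i (A.erase j) then
        (a i ^ s * cmc q a (A.erase j) i) * (a j ^ r * cpc q a A j) else 0)
      = (if B = A then (a j ^ s * cmc q a (A.erase j) j) * (a j ^ r * cpc q a A j) else 0)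
        + ∑ i ∈ Aᶜ, if B = insert i (A.erase j) then
            (a i ^ s * cmc q a (A.erase j) i) * (a j ^ r * cpc q a A j) else 0 := by
    intro j hj
    rw [compl_erase, Finset.sum_insert (by simp [hj] : j ∉ Aᶜ), Finset.insert_erase hj]
  rw [Finset.sum_congr rfl h1, Finset.sum_congr rfl h2, Finset.sum_add_distrib,
    Finset.sum_add_distrib]
  have hoff : (∑ j ∈ Aᶜ, ∑ i ∈ A, if B = (insert j A).erase i then
        (a i ^ r * cpc q a (insert j A) i) * (a j ^ s * cmc q a A j) else 0)
      = ∑ j ∈ A, ∑ i ∈ Aᶜ, if B = insert i (A.erase j) then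
          (a i ^ s * cmc q a (A.erase j) i) * (a j ^ r * cpc q a A j) else 0 := by
    rw [Finset.sum_comm]
    refine Finset.sum_congr rfl fun x hx => Finset.sum_congr rfl fun y hy => ?_
    have hyx : y ≠ x := fun h => (mem_compl.mp hy) (h ▸ hx)
    rw [Finset.erase_insert_of_ne hyx]
    by_cases hB : B = insert y (A.erase x)
    · rw [if_pos hB, if_pos hB, cmc_erase hx y, cpc_insert (mem_compl.mp hy) x]
      ring
    · rw [if_neg hB, if_neg hB]
  rw [hoff]
  by_cases hBA : B = A
  · subst hBA
    simp only [eq_self_iff_true, true_and, if_true]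
    have e1 : (∑ j ∈ Bᶜ, (a j ^ r * cpc q a (insert j B) j) * (a j ^ s * cmc q a B j))
        = ∑ j ∈ Bᶜ, a j ^ (r + s) * (cpc q a (insert j B) j * cmc q a B j) :=
      Finset.sum_congr rfl fun j _ => by rw [zpow_add₀ (ha0 j)]; ring
    have e2 : (∑ j ∈ B, (a j ^ s * cmc q a (B.erase j) j) * (a j ^ r * cpc q a B j))
        = ∑ j ∈ B, a j ^ (r + s) * (cmc q a (B.erase j) j * cpc q a B j) :=
      Finset.sum_congr rfl fun j _ => by rw [zpow_add₀ (ha0 j)]; ring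
    rw [e1, e2, ← KeyPF hq ha0 ha B (r + s), inv_mul_cancel_left₀ hq2]
    ring
  · rw [if_neg (show ¬(B = A ∧ 0 ≤ r + s) from fun hc => hBA hc.1),
      if_neg (show ¬(B = A ∧ r + s ≤ 0) from fun hc => hBA hc.1)]
    simp only [if_neg hBA]
    simp only [Finset.sum_const_zero]
    ring

variable (n q a)

/-- the formulas of Proposition 2.9 define a representation of the
quantum loop algebra `U_q(Lsl₂)` on the `2ⁿ`-dimensional space with basis
`(V_A)_{A ⊆ {1,…,n}}`: all the defining relations of Drinfel'd's second
presentation hold coefficient-wise. -/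
theorem thin_standard_module_is_representation
    (hq : q ≠ 0) (hroot : ∀ k : ℕ, 1 ≤ k → q ^ k ≠ 1)
    (ha0 : ∀ i, a i ≠ 0) (ha : Function.Injective a) :
    (∀ m k : ℤ, Php n q a m * Php n q a k = Php n q a k * Php n q a m
       ∧ Php n q a m * Phm n q a k = Phm n q a k * Php n q a m
       ∧ Phm n q a m * Phm n q a k = Phm n q a k * Phm n q a m)
    ∧ (∀ m t : ℤ,
        q⁻¹ • (Php n q a m * Xp n q a t) - q • (Php n q a (m - 1) * Xp n q a (t + 1))
          = q • (Xp n q a t * Php n q a m) - q⁻¹ • (Xp n q a (t + 1) * Php n q a (m - 1)))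
    ∧ (∀ m t : ℤ,
        q⁻¹ • (Phm n q a m * Xp n q a t) - q • (Phm n q a (m - 1) * Xp n q a (t + 1))
          = q • (Xp n q a t * Phm n q a m) - q⁻¹ • (Xp n q a (t + 1) * Phm n q a (m - 1)))
    ∧ (∀ m t : ℤ,
        q • (Php n q a m * Xm n q a t) - q⁻¹ • (Php n q a (m - 1) * Xm n q a (t + 1))
          = q⁻¹ • (Xm n q a t * Php n q a m) - q • (Xm n q a (t + 1) * Php n q a (m - 1)))
    ∧ (∀ m t : ℤ,
        q • (Phm n q a m * Xm n q a t) - q⁻¹ • (Phm n q a (m - 1) * Xm n q a (t + 1))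
          = q⁻¹ • (Xm n q a t * Phm n q a m) - q • (Xm n q a (t + 1) * Phm n q a (m - 1)))
    ∧ (∀ r s : ℤ,
        Xp n q a r * Xm n q a s - Xm n q a s * Xp n q a r
          = (q - q⁻¹)⁻¹ • (Php n q a (r + s) - Phm n q a (r + s)))
    ∧ (∀ r s : ℤ,
        Xp n q a (r + 1) * Xp n q a s - (q ^ 2) • (Xp n q a r * Xp n q a (s + 1))
          = (q ^ 2) • (Xp n q a s * Xp n q a (r + 1)) - Xp n q a (s + 1) * Xp n q a r)
    ∧ (∀ r s : ℤ,
        Xm n q a (r + 1) * Xm n q a s - (q⁻¹ ^ 2) • (Xm n q a r * Xm n q a (s + 1))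
          = (q⁻¹ ^ 2) • (Xm n q a s * Xm n q a (r + 1)) - Xm n q a (s + 1) * Xm n q a r) := by
  have hq2 : q - q⁻¹ ≠ 0 := by
    intro h
    have hqq : q = q⁻¹ := sub_eq_zero.mp h
    have h2 : q ^ 2 = 1 := by
      rw [pow_two]
      nth_rewrite 2 [hqq]
      exact mul_inv_cancel₀ hq
    exact hroot 2 (by norm_num) h2
  exact ⟨fun m k => ⟨rel1a m k, rel1b m k, rel1c m k⟩,
    fun m t => rel2 hq ha0 m t,
    fun m t => rel3 hq ha0 m t,
    fun m t => rel4 hq ha0 m t,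
    fun m t => rel5 hq ha0 m t,
    fun r s => rel6 hq hq2 ha0 ha r s,
    fun r s => rel7 hq ha0 ha r s,
    fun r s => rel8 hq ha0 ha r s⟩

end ThinStandardModule
end
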